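/- For every n ≥ 1 there is a bijection h from N_n to S_n such that, for every M ∈ N_n, Ascbottom(h(M)) = Lcr(M) and {a−1 : a ∈ adjAsc(h(M))} = {i−1 : i ∈ LRcr(M)} (equivalently, h maps left crossings to ascent bottoms and double crossings to short ascents). -/

import Mathlib

/-! ## Permutations of `{1,…,n}` encoded as functions `ℕ → ℕ` (zero outside `[1,n]`). -/

/-- `f` represents a permutation of `{1,…,n}` in one-line notation:
`f j` is the value in position `j` (for `1 ≤ j ≤ n`), and `f` is `0` elsewhere. -/
def IsPermOn (n : ℕ) (f : ℕ → ℕ) : Prop :=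
  Set.BijOn f (Set.Icc 1 n) (Set.Icc 1 n) ∧ ∀ i, i ∉ Set.Icc 1 n → f i = 0

/-- Ascent tops: values `f j` with `2 ≤ j ≤ n` and `f (j-1) < f j`. -/
def permAsc (n : ℕ) (f : ℕ → ℕ) : Set ℕ :=
  {v | ∃ j, 2 ≤ j ∧ j ≤ n ∧ f (j - 1) < f j ∧ v = f j}

/-- Short ascents (adjacencies): ascent tops with `f (j-1) + 1 = f j`. -/
def permAdjAsc (n : ℕ) (f : ℕ → ℕ) : Set ℕ :=
  {v | ∃ j, 2 ≤ j ∧ j ≤ n ∧ f (j - 1) + 1 = f j ∧ v = f j}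

/-- Occurrences of the pattern `P`: ascent tops `f j` such that the value
`f j - 1` occurs in a position greater than `j`. -/
def permP (n : ℕ) (f : ℕ → ℕ) : Set ℕ :=
  {v | ∃ j, 2 ≤ j ∧ j ≤ n ∧ f (j - 1) < f j ∧ v = f j ∧
    ∃ k, j < k ∧ k ≤ n ∧ f k = f j - 1}

/-- Occurrences of the pattern `Q`: ascent tops `f j` such that the value
`f j - 1` occurs in a position less than `j - 1`. -/
def permQ (n : ℕ) (f : ℕ → ℕ) : Set ℕ :=
  {v | ∃ j, 2 ≤ j ∧ j ≤ n ∧ f (j - 1) < f j ∧ v = f j ∧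
    ∃ k, 1 ≤ k ∧ k + 1 < j ∧ f k = f j - 1}

/-- Silly ascents: `(Asc(π) ∪ {π 1}) \ {n}`. -/
def permAscSilly (n : ℕ) (f : ℕ → ℕ) : Set ℕ :=
  (permAsc n f ∪ {f 1}) \ {n}

/-- Occurrences of the silly pattern `P`: silly ascents `a` such that the value
`a + 1` occurs to the left of the value `a`. -/
def permPSilly (n : ℕ) (f : ℕ → ℕ) : Set ℕ :=
  {a | a ∈ permAscSilly n f ∧ ∃ j k, 1 ≤ j ∧ j < k ∧ k ≤ n ∧ f j = a + 1 ∧ f k = a}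

/-- Occurrences of the silly pattern `Q`: silly ascents `a` such that the value
`a + 1` occurs to the right of the value `a`. -/
def permQSilly (n : ℕ) (f : ℕ → ℕ) : Set ℕ :=
  {a | a ∈ permAscSilly n f ∧ ∃ j k, 1 ≤ j ∧ j < k ∧ k ≤ n ∧ f j = a ∧ f k = a + 1}

/-- Right minima: values having no smaller value to their right. -/
def permRmin (n : ℕ) (f : ℕ → ℕ) : Set ℕ :=
  {v | ∃ j, 1 ≤ j ∧ j ≤ n ∧ v = f j ∧ ∀ k, j < k → k ≤ n → f j < f k}

/-- Right maxima: values having no larger value to their right. -/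
def permRmax (n : ℕ) (f : ℕ → ℕ) : Set ℕ :=
  {v | ∃ j, 1 ≤ j ∧ j ≤ n ∧ v = f j ∧ ∀ k, j < k → k ≤ n → f k < f j}

/-- The number of components of the finest decomposition of a permutation into
direct sums: the number of `k ∈ [1,n]` such that `f` maps `{1,…,k}` into itself. -/
noncomputable def permComp (n : ℕ) (f : ℕ → ℕ) : ℕ :=
  Set.ncard {k | 1 ≤ k ∧ k ≤ n ∧ ∀ i, 1 ≤ i → i ≤ k → f i ≤ k}

/-- The number of descents. -/
noncomputable def permDes (n : ℕ) (f : ℕ → ℕ) : ℕ :=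
  Set.ncard {j | 2 ≤ j ∧ j ≤ n ∧ f j < f (j - 1)}

/-- Ascent bottoms: values `f j` with `1 ≤ j < n` and `f j < f (j+1)`. -/
def permAscBottom (n : ℕ) (f : ℕ → ℕ) : Set ℕ :=
  {v | ∃ j, 1 ≤ j ∧ j + 1 ≤ n ∧ f j < f (j + 1) ∧ v = f j}

/-- Long ascent bottoms: values `f j` with `1 ≤ j < n` and `f j < f (j+1) - 1`. -/
def permAscBottomProper (n : ℕ) (f : ℕ → ℕ) : Set ℕ :=
  {v | ∃ j, 1 ≤ j ∧ j + 1 ≤ n ∧ f j + 1 < f (j + 1) ∧ v = f j}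

/-! ## Matchings on `{1,…,2n}`.

The arcs are indexed `1,…,n` in increasing order of their closers; `opener i`
and `closer i` are the endpoints of the `i`-th arc (and `0` outside `[1,n]`). -/

structure Matching (n : ℕ) where
  opener : ℕ → ℕ
  closer : ℕ → ℕ
  opener_lt_closer : ∀ i, 1 ≤ i → i ≤ n → opener i < closer i
  closer_mono : ∀ i j, 1 ≤ i → i < j → j ≤ n → closer i < closer j
  opener_mem : ∀ i, 1 ≤ i → i ≤ n → opener i ∈ Set.Icc 1 (2 * n)
  closer_mem : ∀ i, 1 ≤ i → i ≤ n → closer i ∈ Set.Icc 1 (2 * n)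
  opener_inj : ∀ i j, 1 ≤ i → i ≤ n → 1 ≤ j → j ≤ n → opener i = opener j → i = j
  opener_ne_closer : ∀ i j, 1 ≤ i → i ≤ n → 1 ≤ j → j ≤ n → opener i ≠ closer j
  cover : ∀ m ∈ Set.Icc 1 (2 * n), ∃ i, 1 ≤ i ∧ i ≤ n ∧ (opener i = m ∨ closer i = m)
  opener_eq_zero : ∀ i, i ∉ Set.Icc 1 n → opener i = 0
  closer_eq_zero : ∀ i, i ∉ Set.Icc 1 n → closer i = 0

namespace Matching

variable {n : ℕ}

/-- No left nesting: no pair of arcs `A, B` with `opener A = opener B + 1`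
and `closer A < closer B`. -/
def NoLeftNesting (M : Matching n) : Prop :=
  ∀ i j, 1 ≤ i → i ≤ n → 1 ≤ j → j ≤ n →
    ¬(M.opener i = M.opener j + 1 ∧ M.closer i < M.closer j)

/-- Right nestings, indexed by the arc with the larger closer. -/
def RneSet (M : Matching n) : Set ℕ :=
  {i | 2 ≤ i ∧ i ≤ n ∧ M.opener i < M.opener (i - 1) ∧ M.closer i = M.closer (i - 1) + 1}

/-- Right crossings, indexed by the arc with the larger closer. -/
def RcrSet (M : Matching n) : Set ℕ :=
  {i | 2 ≤ i ∧ i ≤ n ∧ M.opener (i - 1) < M.opener i ∧ M.opener i < M.closer (i - 1) ∧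
    M.closer i = M.closer (i - 1) + 1}

/-- Double crossings (both left and right crossings), indexed by the right arc. -/
def LRcrSet (M : Matching n) : Set ℕ :=
  {i | i ∈ M.RcrSet ∧ M.opener i = M.opener (i - 1) + 1}

/-- Right single crossings. -/
def RcrpSet (M : Matching n) : Set ℕ := M.RcrSet \ M.LRcrSet

/-- Right adjacencies, indexed by the arc with the larger closer. -/
def RadjSet (M : Matching n) : Set ℕ :=
  {i | 2 ≤ i ∧ i ≤ n ∧ M.closer i = M.closer (i - 1) + 1}

/-- Left crossings, indexed by the arc with the smaller opener. -/
def LcrSet (M : Matching n) : Set ℕ :=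
  {i | 1 ≤ i ∧ i ≤ n ∧ ∃ j, 1 ≤ j ∧ j ≤ n ∧ M.opener j = M.opener i + 1 ∧
    M.opener j < M.closer i ∧ M.closer i < M.closer j}

/-- `Min(M)`: arcs whose opener lies to the left of the first closer. -/
def MinSet (M : Matching n) : Set ℕ :=
  {i | 1 ≤ i ∧ i ≤ n ∧ M.opener i < M.closer 1}

/-- The number of components of the finest decomposition of `M` into direct sums:
the number of `k ∈ [1,n]` such that `{1,…,2k}` is a union of arcs. -/
noncomputable def comp (M : Matching n) : ℕ :=
  Set.ncard {k | 1 ≤ k ∧ k ≤ n ∧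
    ∀ i, 1 ≤ i → i ≤ n → (M.closer i ≤ 2 * k ∨ 2 * k < M.opener i)}

/-- `S` is the direct sum of `M` (size `n₁`) and `M'` (size `n₂`): the diagrams
side by side, the elements of `M'` shifted by `2 n₁`. -/
def IsDsum {n₁ n₂ m : ℕ} (M : Matching n₁) (M' : Matching n₂) (S : Matching m) : Prop :=
  m = n₁ + n₂ ∧
  (∀ i, 1 ≤ i → i ≤ n₁ → S.opener i = M.opener i ∧ S.closer i = M.closer i) ∧
  (∀ i, 1 ≤ i → i ≤ n₂ → S.opener (n₁ + i) = M'.opener i + 2 * n₁ ∧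
    S.closer (n₁ + i) = M'.closer i + 2 * n₁)

end Matching

/-! ## 0-1-fillings of partition shapes.

The shape has `len ≥ 1` columns; column `i` (for `1 ≤ i ≤ len`) has height
`shape i ≥ 1`, weakly increasing from left to right (and `shape i = 0` outside
`[1, len]`).  The dots are the cells holding a `1`. -/

structure Filling where
  len : ℕ
  shape : ℕ → ℕ
  dots : Set (ℕ × ℕ)
  len_pos : 1 ≤ len
  shape_pos : ∀ i, 1 ≤ i → i ≤ len → 1 ≤ shape i
  shape_mono : ∀ i j, 1 ≤ i → i ≤ j → j ≤ len → shape i ≤ shape j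
  shape_eq_zero : ∀ i, i ∉ Set.Icc 1 len → shape i = 0
  dots_mem : ∀ p ∈ dots, 1 ≤ p.1 ∧ p.1 ≤ len ∧ 1 ≤ p.2 ∧ p.2 ≤ shape p.1

namespace Filling

/-- The number of dots of a filling. -/
noncomputable def nDots (T : Filling) : ℕ := Set.ncard T.dots

/-- Every column contains exactly one dot. -/
def ColumnStrict (T : Filling) : Prop :=
  ∀ i, 1 ≤ i → i ≤ T.len → ∃! j, (i, j) ∈ T.dots

/-- Every column contains at least one dot. -/
def ColumnPositive (T : Filling) : Prop :=
  ∀ i, 1 ≤ i → i ≤ T.len → ∃ j, (i, j) ∈ T.dots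

/-- The length of row `j`: the number of columns of height at least `j`. -/
noncomputable def rowLen (T : Filling) (j : ℕ) : ℕ :=
  Set.ncard {i | 1 ≤ i ∧ i ≤ T.len ∧ j ≤ T.shape i}

/-- A shape is flat if its nonempty rows have pairwise distinct lengths. -/
def Flat (T : Filling) : Prop :=
  ∀ j j', 1 ≤ j → 1 ≤ j' → j ≠ j' → 1 ≤ T.rowLen j → 1 ≤ T.rowLen j' →
    T.rowLen j ≠ T.rowLen j'

/-- A staircase shape: `shape = (1, 2, …, len)`. -/
def Staircase (T : Filling) : Prop :=
  ∀ i, 1 ≤ i → i ≤ T.len → T.shape i = i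

/-- The lazy set `X(T)`: columns having the same height as their left neighbour. -/
def lazySet (T : Filling) : Set ℕ :=
  {i | 2 ≤ i ∧ i ≤ T.len ∧ T.shape (i - 1) = T.shape i}

/-- Descents of a column-strict filling: columns whose dot is strictly lower
than the dot of the previous column. -/
def DesSet (T : Filling) : Set ℕ :=
  {i | 2 ≤ i ∧ i ≤ T.len ∧ ∃ j j', (i - 1, j) ∈ T.dots ∧ (i, j') ∈ T.dots ∧ j' < j}

/-- Ascents of a column-strict filling. -/
def AscSet (T : Filling) : Set ℕ :=
  {i | 2 ≤ i ∧ i ≤ T.len ∧ ∃ j j', (i - 1, j) ∈ T.dots ∧ (i, j') ∈ T.dots ∧ j < j'}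

/-- Repetitions of a column-strict filling. -/
def RepSet (T : Filling) : Set ℕ :=
  {i | 2 ≤ i ∧ i ≤ T.len ∧ ∃ j, (i - 1, j) ∈ T.dots ∧ (i, j) ∈ T.dots}

/-- Columns with a dot in their topmost cell. -/
def MaxSet (T : Filling) : Set ℕ :=
  {i | 1 ≤ i ∧ i ≤ T.len ∧ (i, T.shape i) ∈ T.dots}

/-- Columns with a dot on the bottom row. -/
def MinSet (T : Filling) : Set ℕ :=
  {i | 1 ≤ i ∧ i ≤ T.len ∧ (i, 1) ∈ T.dots}

/-- For a column-strict filling: columns whose dot is strictly closer to the top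
of its column than is any dot strictly to the right. -/
def RmaxColSet (T : Filling) : Set ℕ :=
  {i | ∃ j, (i, j) ∈ T.dots ∧
    ∀ i' j', (i', j') ∈ T.dots → i < i' → T.shape i - j < T.shape i' - j'}

/-- `rmax(T)`: the number of dots strictly closer to the top of their column
than is any dot strictly to the right. -/
noncomputable def rmaxDots (T : Filling) : ℕ :=
  Set.ncard {p | p ∈ T.dots ∧
    ∀ q ∈ T.dots, p.1 < q.1 → T.shape p.1 - p.2 < T.shape q.1 - q.2}

/-- `lmin(T)`: the number of dots strictly to the left of any dot strictly below. -/
noncomputable def lminDots (T : Filling) : ℕ :=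
  Set.ncard {p | p ∈ T.dots ∧ ∀ q ∈ T.dots, q.2 < p.2 → p.1 < q.1}

/-- The number of components of the finest decomposition of `T` into direct sums:
the number of columns `k` after which the filling can be cut. -/
noncomputable def comp (T : Filling) : ℕ :=
  Set.ncard {k | 1 ≤ k ∧ k ≤ T.len ∧ (k = T.len ∨ T.shape k < T.shape (k + 1)) ∧
    ∀ p ∈ T.dots, k < p.1 → T.shape k < p.2}

/-- `S = T ⊕ T'`: `T'` is placed strictly to the north-east of `T`, the
rectangle below `T'` being filled with empty cells. -/
def IsDsum (T T' S : Filling) : Prop :=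
  S.len = T.len + T'.len ∧
  (∀ i, 1 ≤ i → i ≤ T.len → S.shape i = T.shape i) ∧
  (∀ i, 1 ≤ i → i ≤ T'.len → S.shape (T.len + i) = T.shape T.len + T'.shape i) ∧
  S.dots = T.dots ∪ (fun p : ℕ × ℕ => (p.1 + T.len, p.2 + T.shape T.len)) '' T'.dots

/-- A square shape. -/
def Square (T : Filling) : Prop :=
  ∀ i, 1 ≤ i → i ≤ T.len → T.shape i = T.len

/-- Enriched permutation filling: a positive filling of a square shape in which
a dot is the leftmost dot of its row iff it is the topmost dot of its column. -/
def Enriched (T : Filling) : Prop :=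
  T.Square ∧
  (∀ i, 1 ≤ i → i ≤ T.len → ∃ j, (i, j) ∈ T.dots) ∧
  (∀ j, 1 ≤ j → j ≤ T.len → ∃ i, (i, j) ∈ T.dots) ∧
  (∀ p ∈ T.dots,
    ((∀ q ∈ T.dots, q.2 = p.2 → p.1 ≤ q.1) ↔ (∀ q ∈ T.dots, q.1 = p.1 → q.2 ≤ p.2)))

/-- `S = R ⊞ R'`: boxed sum of enriched permutation fillings. -/
def IsBoxSum (R R' S : Filling) : Prop :=
  S.len = R.len + R'.len ∧
  (∀ i, 1 ≤ i → i ≤ S.len → S.shape i = S.len) ∧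
  S.dots = R.dots ∪ (fun p : ℕ × ℕ => (p.1 + R.len, p.2 + R.len)) '' R'.dots

/-- The number of components of the finest decomposition into boxed sums. -/
noncomputable def boxcomp (T : Filling) : ℕ :=
  Set.ncard {k | 1 ≤ k ∧ k ≤ T.len ∧
    ∀ p ∈ T.dots, (p.1 ≤ k ∧ p.2 ≤ k) ∨ (k < p.1 ∧ k < p.2)}

end Filling

/-! ## Barred permutations, hatted permutations and marked matchings. -/

/-- A barred permutation: a permutation of `{1,…,n}` together with a set of
barred ascent tops. -/
structure BarredPerm where
  n : ℕ
  toFun : ℕ → ℕ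
  X : Set ℕ
  n_pos : 1 ≤ n
  isPerm : IsPermOn n toFun
  X_subset : X ⊆ permAsc n toFun

/-- Direct sum of barred permutations. -/
def BarredPerm.IsDsum (B B' C : BarredPerm) : Prop :=
  C.n = B.n + B'.n ∧
  (∀ i, C.toFun i = if i ≤ B.n then B.toFun i
    else if i ≤ B.n + B'.n then B'.toFun (i - B.n) + B.n else 0) ∧
  C.X = B.X ∪ (fun a => a + B.n) '' B'.X

/-- A hatted permutation: a permutation of `{1,…,n}` together with a set of
hatted silly ascents. -/
structure HattedPerm where
  n : ℕ
  toFun : ℕ → ℕ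
  X : Set ℕ
  n_pos : 1 ≤ n
  isPerm : IsPermOn n toFun
  X_subset : X ⊆ permAscSilly n toFun

/-- Direct sum of hatted permutations. -/
def HattedPerm.IsDsum (B B' C : HattedPerm) : Prop :=
  C.n = B.n + B'.n ∧
  (∀ i, C.toFun i = if i ≤ B.n then B.toFun i
    else if i ≤ B.n + B'.n then B'.toFun (i - B.n) + B.n else 0) ∧
  C.X = B.X ∪ (fun a => a + B.n) '' B'.X

/-- A marked matching: a matching without left nestings together with a set of
marked right adjacencies. -/
structure MarkedMatching where
  n : ℕ
  n_pos : 1 ≤ n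
  M : Matching n
  noLeftNesting : M.NoLeftNesting
  X : Set ℕ
  X_subset : X ⊆ M.RadjSet

/-- Direct sum of marked matchings. -/
def MarkedMatching.IsDsum (A B C : MarkedMatching) : Prop :=
  Matching.IsDsum A.M B.M C.M ∧ C.X = A.X ∪ (fun a => a + A.n) '' B.X

/-! ### Auxiliary development -/

open Classical in
/-- A "code": `1 ≤ s i ≤ i` on `[1,n]`, `0` outside. -/
def CodeOn (n : ℕ) (s : ℕ → ℕ) : Prop :=
  (∀ i, 1 ≤ i → i ≤ n → 1 ≤ s i ∧ s i ≤ i) ∧ ∀ i, ¬(1 ≤ i ∧ i ≤ n) → s i = 0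

/-- `j` is in the range of the code `t` (on `[1,N]`). -/
def fibNonempty (N : ℕ) (t : ℕ → ℕ) (j : ℕ) : Prop := ∃ m, 1 ≤ m ∧ m ≤ N ∧ t m = j

/-- Non-maxima of fibers. -/
def isNM (N : ℕ) (t : ℕ → ℕ) (i : ℕ) : Prop :=
  1 ≤ i ∧ i ≤ N ∧ ∃ m, i < m ∧ m ≤ N ∧ t m = t i

/-- The "double crossing" positions of a code. -/
def isD (N : ℕ) (t : ℕ → ℕ) (j : ℕ) : Prop :=
  2 ≤ j ∧ j ≤ N ∧ t j = t (j-1) ∧ ¬ fibNonempty N t j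

def NMset (N : ℕ) (t : ℕ → ℕ) : Set ℕ := {i | isNM N t i}
def Dset (N : ℕ) (t : ℕ → ℕ) : Set ℕ := {i | isD N t i}

namespace PermAux

theorem mem_of_mem (n : ℕ) {f : ℕ → ℕ} (hf : IsPermOn n f) {j : ℕ}
    (h1 : 1 ≤ j) (h2 : j ≤ n) : 1 ≤ f j ∧ f j ≤ n := by
  have := hf.1.1 (Set.mem_Icc.2 ⟨h1, h2⟩)
  exact Set.mem_Icc.1 this

theorem injOn (n : ℕ) {f : ℕ → ℕ} (hf : IsPermOn n f) {i j : ℕ}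
    (hi1 : 1 ≤ i) (hi2 : i ≤ n) (hj1 : 1 ≤ j) (hj2 : j ≤ n) (h : f i = f j) : i = j :=
  hf.1.2.1 (Set.mem_Icc.2 ⟨hi1, hi2⟩) (Set.mem_Icc.2 ⟨hj1, hj2⟩) h

theorem surjOn (n : ℕ) {f : ℕ → ℕ} (hf : IsPermOn n f) {v : ℕ}
    (h1 : 1 ≤ v) (h2 : v ≤ n) : ∃ q, 1 ≤ q ∧ q ≤ n ∧ f q = v := by
  obtain ⟨q, hq, hfq⟩ := hf.1.2.2 (Set.mem_Icc.2 ⟨h1, h2⟩)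
  exact ⟨q, (Set.mem_Icc.1 hq).1, (Set.mem_Icc.1 hq).2, hfq⟩

/-- Position of the value `v` in the permutation `f`. -/
noncomputable def posOf (n : ℕ) (f : ℕ → ℕ) (v : ℕ) : ℕ :=
  sInf {q | 1 ≤ q ∧ q ≤ n ∧ f q = v}

theorem posOf_spec (n : ℕ) {f : ℕ → ℕ} (hf : IsPermOn n f) {v : ℕ}
    (h1 : 1 ≤ v) (h2 : v ≤ n) :
    1 ≤ posOf n f v ∧ posOf n f v ≤ n ∧ f (posOf n f v) = v := by
  obtain ⟨q, hq1, hq2, hq3⟩ := surjOn n hf h1 h2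
  have hne : {q | 1 ≤ q ∧ q ≤ n ∧ f q = v}.Nonempty := ⟨q, hq1, hq2, hq3⟩
  exact Nat.sInf_mem hne

theorem posOf_eq (n : ℕ) {f : ℕ → ℕ} (hf : IsPermOn n f) {v q : ℕ}
    (h1 : 1 ≤ v) (h2 : v ≤ n) (hq1 : 1 ≤ q) (hq2 : q ≤ n) (hq3 : f q = v) :
    posOf n f v = q := by
  obtain ⟨ha, hb, hc⟩ := posOf_spec n hf h1 h2
  exact injOn n hf ha hb hq1 hq2 (by rw [hc, hq3])

end PermAux

namespace MatchAux

open Finset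

/-- Closer positions determined by a code. -/
def ccl (n : ℕ) (s : ℕ → ℕ) (j : ℕ) : ℕ :=
  if 1 ≤ j ∧ j ≤ n then j + ((Finset.Icc 1 n).filter (fun i => s i ≤ j)).card else 0

/-- Opener positions determined by a code. -/
def cop (n : ℕ) (s : ℕ → ℕ) (i : ℕ) : ℕ :=
  if 1 ≤ i ∧ i ≤ n then
    (s i - 1) + ((Finset.Icc 1 n).filter (fun m => s m < s i ∨ (s m = s i ∧ m ≤ i))).card
  else 0

variable {n : ℕ} {s : ℕ → ℕ}

theorem ccl_eq {j : ℕ} (h1 : 1 ≤ j) (h2 : j ≤ n) :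
    ccl n s j = j + ((Finset.Icc 1 n).filter (fun i => s i ≤ j)).card := by
  simp [ccl, h1, h2]

theorem cop_eq {i : ℕ} (h1 : 1 ≤ i) (h2 : i ≤ n) :
    cop n s i = (s i - 1) +
      ((Finset.Icc 1 n).filter (fun m => s m < s i ∨ (s m = s i ∧ m ≤ i))).card := by
  simp [cop, h1, h2]

theorem ccl_mono {i j : ℕ} (h1 : 1 ≤ i) (h : i < j) (h2 : j ≤ n) :
    ccl n s i < ccl n s j := by
  rw [ccl_eq h1 (le_trans (le_of_lt h) h2), ccl_eq (le_trans h1 (le_of_lt h)) h2]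
  have hc : ((Finset.Icc 1 n).filter (fun k => s k ≤ i)).card ≤
      ((Finset.Icc 1 n).filter (fun k => s k ≤ j)).card := by
    apply Finset.card_le_card
    apply Finset.monotone_filter_right
    intro k hk
    omega
  omega

theorem ccl_mono' {i j : ℕ} (h1 : 1 ≤ i) (h : i ≤ j) (h2 : j ≤ n) :
    ccl n s i ≤ ccl n s j := by
  rcases eq_or_lt_of_le h with rfl | hlt
  · exact le_rfl
  · exact le_of_lt (ccl_mono h1 hlt h2)

theorem cop_pos {i : ℕ} (h1 : 1 ≤ i) (h2 : i ≤ n) : 1 ≤ cop n s i := by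
  rw [cop_eq h1 h2]
  have : i ∈ (Finset.Icc 1 n).filter (fun m => s m < s i ∨ (s m = s i ∧ m ≤ i)) := by
    simp [Finset.mem_Icc, h1, h2]
  have := Finset.card_pos.2 ⟨i, this⟩
  omega

theorem cop_lt_ccl_code (hs : CodeOn n s) {i : ℕ} (h1 : 1 ≤ i) (h2 : i ≤ n) :
    cop n s i < ccl n s (s i) := by
  obtain ⟨hsi1, hsi2⟩ := hs.1 i h1 h2
  rw [cop_eq h1 h2, ccl_eq hsi1 (le_trans hsi2 h2)]
  have hc : ((Finset.Icc 1 n).filter (fun m => s m < s i ∨ (s m = s i ∧ m ≤ i))).card ≤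
      ((Finset.Icc 1 n).filter (fun m => s m ≤ s i)).card := by
    apply Finset.card_le_card
    apply Finset.monotone_filter_right
    intro k _ hk
    rcases hk with h | ⟨h, _⟩ <;> omega
  omega

theorem ccl_pred_lt_cop (hs : CodeOn n s) {i : ℕ} (h1 : 1 ≤ i) (h2 : i ≤ n) :
    ccl n s (s i - 1) < cop n s i := by
  obtain ⟨hsi1, hsi2⟩ := hs.1 i h1 h2
  rcases Nat.lt_or_ge (s i) 2 with h | h
  · have : s i - 1 = 0 := by omega
    rw [this]
    have : ccl n s 0 = 0 := by simp [ccl]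
    rw [this]
    exact cop_pos h1 h2
  · rw [cop_eq h1 h2, ccl_eq (by omega) (by omega)]
    have hc : ((Finset.Icc 1 n).filter (fun m => s m ≤ s i - 1)).card <
        ((Finset.Icc 1 n).filter (fun m => s m < s i ∨ (s m = s i ∧ m ≤ i))).card := by
      apply Finset.card_lt_card
      constructor
      · intro k hk
        simp only [Finset.mem_filter] at hk ⊢
        exact ⟨hk.1, Or.inl (by omega)⟩
      · intro hsub
        have : i ∈ (Finset.Icc 1 n).filter (fun m => s m < s i ∨ (s m = s i ∧ m ≤ i)) := by
          simp [Finset.mem_Icc, h1, h2]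
        have := hsub this
        simp only [Finset.mem_filter] at this
        omega
    omega

theorem cop_fiber_mono (hs : CodeOn n s) {i j : ℕ} (h1 : 1 ≤ i) (hij : i < j) (h2 : j ≤ n)
    (hfib : s i = s j) : cop n s i < cop n s j := by
  rw [cop_eq h1 (by omega), cop_eq (by omega) h2, hfib]
  have hc : ((Finset.Icc 1 n).filter (fun m => s m < s j ∨ (s m = s j ∧ m ≤ i))).card <
      ((Finset.Icc 1 n).filter (fun m => s m < s j ∨ (s m = s j ∧ m ≤ j))).card := by
    apply Finset.card_lt_card
    constructor
    · intro k hk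
      simp only [Finset.mem_filter] at hk ⊢
      rcases hk.2 with h | ⟨h, h'⟩
      · exact ⟨hk.1, Or.inl h⟩
      · exact ⟨hk.1, Or.inr ⟨h, by omega⟩⟩
    · intro hsub
      have hjm : j ∈ (Finset.Icc 1 n).filter (fun m => s m < s j ∨ (s m = s j ∧ m ≤ j)) := by
        simp [Finset.mem_Icc, h2]; omega
      have := hsub hjm
      simp only [Finset.mem_filter] at this
      omega
  omega

theorem cop_lt_ccl_self (hs : CodeOn n s) {i : ℕ} (h1 : 1 ≤ i) (h2 : i ≤ n) :
    cop n s i < ccl n s i := by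
  obtain ⟨hsi1, hsi2⟩ := hs.1 i h1 h2
  exact lt_of_lt_of_le (cop_lt_ccl_code hs h1 h2) (ccl_mono' hsi1 hsi2 h2)

theorem cop_inj (hs : CodeOn n s) {i j : ℕ} (hi1 : 1 ≤ i) (hi2 : i ≤ n) (hj1 : 1 ≤ j)
    (hj2 : j ≤ n) (h : cop n s i = cop n s j) : i = j := by
  obtain ⟨hsi1, hsi2⟩ := hs.1 i hi1 hi2
  obtain ⟨hsj1, hsj2⟩ := hs.1 j hj1 hj2
  rcases lt_trichotomy (s i) (s j) with hlt | heq | hlt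
  · have h1 : cop n s i < ccl n s (s i) := cop_lt_ccl_code hs hi1 hi2
    have h2 : ccl n s (s i) ≤ ccl n s (s j - 1) := ccl_mono' hsi1 (by omega) (by omega)
    have h3 : ccl n s (s j - 1) < cop n s j := ccl_pred_lt_cop hs hj1 hj2
    omega
  · rcases lt_trichotomy i j with hij | rfl | hij
    · exact absurd h (Nat.ne_of_lt (cop_fiber_mono hs hi1 hij hj2 heq))
    · rfl
    · exact absurd h.symm (Nat.ne_of_lt (cop_fiber_mono hs hj1 hij hi2 heq.symm))
  · have h1 : cop n s j < ccl n s (s j) := cop_lt_ccl_code hs hj1 hj2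
    have h2 : ccl n s (s j) ≤ ccl n s (s i - 1) := ccl_mono' hsj1 (by omega) (by omega)
    have h3 : ccl n s (s i - 1) < cop n s i := ccl_pred_lt_cop hs hi1 hi2
    omega

theorem cop_ne_ccl (hs : CodeOn n s) {i j : ℕ} (hi1 : 1 ≤ i) (hi2 : i ≤ n) (hj1 : 1 ≤ j)
    (hj2 : j ≤ n) : cop n s i ≠ ccl n s j := by
  obtain ⟨hsi1, hsi2⟩ := hs.1 i hi1 hi2
  rcases Nat.lt_or_ge j (s i) with h | h
  · have h2 : ccl n s j ≤ ccl n s (s i - 1) := ccl_mono' hj1 (by omega) (by omega)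
    have h3 : ccl n s (s i - 1) < cop n s i := ccl_pred_lt_cop hs hi1 hi2
    omega
  · have h1 : cop n s i < ccl n s (s i) := cop_lt_ccl_code hs hi1 hi2
    have h2 : ccl n s (s i) ≤ ccl n s j := ccl_mono' hsi1 h hj2
    omega

theorem ccl_mem {j : ℕ} (h1 : 1 ≤ j) (h2 : j ≤ n) : 1 ≤ ccl n s j ∧ ccl n s j ≤ 2 * n := by
  rw [ccl_eq h1 h2]
  have := Finset.card_filter_le (Finset.Icc 1 n) (fun i => s i ≤ j)
  rw [Nat.card_Icc] at this
  omega

theorem cop_mem (hs : CodeOn n s) {i : ℕ} (h1 : 1 ≤ i) (h2 : i ≤ n) :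
    1 ≤ cop n s i ∧ cop n s i ≤ 2 * n := by
  obtain ⟨hsi1, hsi2⟩ := hs.1 i h1 h2
  refine ⟨cop_pos h1 h2, ?_⟩
  rw [cop_eq h1 h2]
  have := Finset.card_filter_le (Finset.Icc 1 n) (fun m => s m < s i ∨ (s m = s i ∧ m ≤ i))
  rw [Nat.card_Icc] at this
  omega

theorem cover_aux (hs : CodeOn n s) {m : ℕ} (h1 : 1 ≤ m) (h2 : m ≤ 2 * n) :
    ∃ i, 1 ≤ i ∧ i ≤ n ∧ (cop n s i = m ∨ ccl n s i = m) := by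
  classical
  set S : Finset ℕ := ((Finset.Icc 1 n).image (cop n s)) ∪ ((Finset.Icc 1 n).image (ccl n s))
    with hS
  have hsub : S ⊆ Finset.Icc 1 (2 * n) := by
    intro x hx
    rw [hS, Finset.mem_union] at hx
    rcases hx with hx | hx <;> rw [Finset.mem_image] at hx <;>
      obtain ⟨i, hi, rfl⟩ := hx <;> rw [Finset.mem_Icc] at hi
    · have := cop_mem hs hi.1 hi.2
      exact Finset.mem_Icc.2 this
    · have := ccl_mem (s := s) hi.1 hi.2
      exact Finset.mem_Icc.2 this
  have hcard1 : ((Finset.Icc 1 n).image (cop n s)).card = n := by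
    rw [Finset.card_image_of_injOn, Nat.card_Icc]
    · omega
    · intro a ha b hb hab
      rw [Finset.mem_coe, Finset.mem_Icc] at ha hb
      exact cop_inj hs ha.1 ha.2 hb.1 hb.2 hab
  have hcard2 : ((Finset.Icc 1 n).image (ccl n s)).card = n := by
    rw [Finset.card_image_of_injOn, Nat.card_Icc]
    · omega
    · intro a ha b hb hab
      rw [Finset.mem_coe, Finset.mem_Icc] at ha hb
      by_contra hne
      rcases Nat.lt_or_ge a b with h | h
      · exact absurd hab (Nat.ne_of_lt (ccl_mono ha.1 h hb.2))
      · have : b < a := by omega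
        exact absurd hab.symm (Nat.ne_of_lt (ccl_mono hb.1 this ha.2))
  have hdisj : Disjoint ((Finset.Icc 1 n).image (cop n s)) ((Finset.Icc 1 n).image (ccl n s)) := by
    rw [Finset.disjoint_left]
    intro x hx hx'
    rw [Finset.mem_image] at hx hx'
    obtain ⟨i, hi, hix⟩ := hx
    obtain ⟨j, hj, hjx⟩ := hx'
    rw [Finset.mem_Icc] at hi hj
    exact cop_ne_ccl hs hi.1 hi.2 hj.1 hj.2 (hix.trans hjx.symm)
  have hcardS : S.card = 2 * n := by
    rw [hS, Finset.card_union_of_disjoint hdisj, hcard1, hcard2]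
    omega
  have heq : S = Finset.Icc 1 (2 * n) := by
    apply Finset.eq_of_subset_of_card_le hsub
    rw [Nat.card_Icc, hcardS]
    omega
  have hm : m ∈ S := by
    rw [heq, Finset.mem_Icc]
    exact ⟨h1, h2⟩
  rw [hS, Finset.mem_union] at hm
  rcases hm with hm | hm <;> rw [Finset.mem_image] at hm <;> obtain ⟨i, hi, hix⟩ := hm <;>
    rw [Finset.mem_Icc] at hi
  · exact ⟨i, hi.1, hi.2, Or.inl hix⟩
  · exact ⟨i, hi.1, hi.2, Or.inr hix⟩

/-- The matching associated to a code. -/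
noncomputable def toMatching (n : ℕ) (s : ℕ → ℕ) (hs : CodeOn n s) : Matching n where
  opener := cop n s
  closer := ccl n s
  opener_lt_closer := fun i h1 h2 => cop_lt_ccl_self hs h1 h2
  closer_mono := fun i j h1 h h2 => ccl_mono h1 h h2
  opener_mem := fun i h1 h2 => Set.mem_Icc.2 (cop_mem hs h1 h2)
  closer_mem := fun i h1 h2 => Set.mem_Icc.2 (ccl_mem h1 h2)
  opener_inj := fun i j hi1 hi2 hj1 hj2 h => cop_inj hs hi1 hi2 hj1 hj2 h
  opener_ne_closer := fun i j hi1 hi2 hj1 hj2 => cop_ne_ccl hs hi1 hi2 hj1 hj2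
  cover := fun m hm => by
    obtain ⟨h1, h2⟩ := Set.mem_Icc.1 hm
    obtain ⟨i, a, b, c⟩ := cover_aux hs h1 h2
    exact ⟨i, a, b, c⟩
  opener_eq_zero := fun i hi => by
    rw [Set.mem_Icc] at hi
    simp only [cop, ite_eq_right_iff]
    intro h; omega
  closer_eq_zero := fun i hi => by
    rw [Set.mem_Icc] at hi
    simp only [ccl, ite_eq_right_iff]
    intro h; omega

theorem toMatching_nln (n : ℕ) (s : ℕ → ℕ) (hs : CodeOn n s) :
    (toMatching n s hs).NoLeftNesting := by
  intro i j hi1 hi2 hj1 hj2 ⟨hop, hcl⟩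
  simp only [toMatching] at hop hcl
  obtain ⟨hsi1, hsi2⟩ := hs.1 i hi1 hi2
  obtain ⟨hsj1, hsj2⟩ := hs.1 j hj1 hj2
  -- i < j from closers
  have hij : i < j := by
    by_contra hc
    rcases Nat.lt_or_ge j i with h | h
    · exact absurd hcl (not_lt.2 (le_of_lt (ccl_mono hj1 h hi2)))
    · have heq : i = j := by omega
      rw [heq] at hcl
      omega
  -- same fiber
  have h1i : ccl n s (s i - 1) < cop n s i := ccl_pred_lt_cop hs hi1 hi2
  have h2i : cop n s i < ccl n s (s i) := cop_lt_ccl_code hs hi1 hi2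
  have h1j : ccl n s (s j - 1) < cop n s j := ccl_pred_lt_cop hs hj1 hj2
  have h2j : cop n s j < ccl n s (s j) := cop_lt_ccl_code hs hj1 hj2
  have hfib : s i = s j := by
    rcases lt_trichotomy (s i) (s j) with hlt | heq | hlt
    · have : ccl n s (s i) ≤ ccl n s (s j - 1) := ccl_mono' hsi1 (by omega) (by omega)
      omega
    · exact heq
    · have : ccl n s (s j) ≤ ccl n s (s i - 1) := ccl_mono' hsj1 (by omega) (by omega)
      omega
  have := cop_fiber_mono hs hi1 hij hj2 hfib
  omega

/-- The code of a matching. -/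
noncomputable def codeOf {n : ℕ} (M : Matching n) (i : ℕ) : ℕ :=
  if 1 ≤ i ∧ i ≤ n then sInf {k | 1 ≤ k ∧ k ≤ n ∧ M.opener i < M.closer k} else 0

section CodeOfLemmas

variable {n : ℕ} (M : Matching n)

theorem codeOf_spec {i : ℕ} (h1 : 1 ≤ i) (h2 : i ≤ n) :
    1 ≤ codeOf M i ∧ codeOf M i ≤ i ∧ M.opener i < M.closer (codeOf M i) := by
  have hne : {k | 1 ≤ k ∧ k ≤ n ∧ M.opener i < M.closer k}.Nonempty :=
    ⟨i, h1, h2, M.opener_lt_closer i h1 h2⟩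
  have hmem := Nat.sInf_mem hne
  have hle : sInf {k | 1 ≤ k ∧ k ≤ n ∧ M.opener i < M.closer k} ≤ i :=
    Nat.sInf_le ⟨h1, h2, M.opener_lt_closer i h1 h2⟩
  simp only [codeOf, h1, h2, and_self, if_true]
  exact ⟨hmem.1, hle, hmem.2.2⟩

theorem codeOf_min {i k : ℕ} (h1 : 1 ≤ i) (h2 : i ≤ n) (hk1 : 1 ≤ k) (hk2 : k ≤ n)
    (hk : M.opener i < M.closer k) : codeOf M i ≤ k := by
  simp only [codeOf, h1, h2, and_self, if_true]
  exact Nat.sInf_le ⟨hk1, hk2, hk⟩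

theorem closer_lt_of_lt_codeOf {i k : ℕ} (h1 : 1 ≤ i) (h2 : i ≤ n) (hk1 : 1 ≤ k)
    (hk : k < codeOf M i) : M.closer k < M.opener i := by
  have hk2 : k ≤ n := by
    have := (codeOf_spec M h1 h2).2.1
    omega
  have hnm : k ∉ {k | 1 ≤ k ∧ k ≤ n ∧ M.opener i < M.closer k} := by
    intro hmem
    exact absurd (Nat.sInf_le hmem) (by simp only [codeOf, h1, h2, and_self, if_true] at hk; omega)
  simp only [Set.mem_setOf_eq, hk1, hk2, true_and, not_lt] at hnm
  rcases Nat.lt_or_ge (M.closer k) (M.opener i) with h | h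
  · exact h
  · have : M.opener i = M.closer k := by omega
    exact absurd this (M.opener_ne_closer i k h1 h2 hk1 hk2)

theorem codeOn_codeOf : CodeOn n (codeOf M) := by
  constructor
  · intro i h1 h2
    have := codeOf_spec M h1 h2
    exact ⟨this.1, this.2.1⟩
  · intro i hi
    simp only [codeOf, ite_eq_right_iff]
    intro h; omega

/-- sandwich: `closer (c i - 1) < opener i < closer (c i)`. -/
theorem codeOf_sandwich {i : ℕ} (h1 : 1 ≤ i) (h2 : i ≤ n) :
    M.closer (codeOf M i - 1) < M.opener i ∧ M.opener i < M.closer (codeOf M i) := by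
  obtain ⟨hc1, hc2, hc3⟩ := codeOf_spec M h1 h2
  refine ⟨?_, hc3⟩
  rcases Nat.lt_or_ge (codeOf M i) 2 with h | h
  · have h0 : codeOf M i - 1 = 0 := by omega
    rw [h0, M.closer_eq_zero 0 (by simp)]
    have := M.opener_mem i h1 h2
    rw [Set.mem_Icc] at this
    omega
  · exact closer_lt_of_lt_codeOf M h1 h2 (by omega) (by omega)

theorem closer_reflect {k j : ℕ} (hk1 : 1 ≤ k) (hk2 : k ≤ n) (hj1 : 1 ≤ j) (hj2 : j ≤ n)
    (h : M.closer k < M.closer j) : k < j := by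
  by_contra hc
  rcases Nat.lt_or_ge j k with hlt | hge
  · exact absurd h (not_lt.2 (le_of_lt (M.closer_mono j k hj1 hlt hk2)))
  · have heq : j = k := by omega
    rw [heq] at h
    omega

theorem closer_mono' {k j : ℕ} (hk1 : 1 ≤ k) (h : k ≤ j) (hj2 : j ≤ n) :
    M.closer k ≤ M.closer j := by
  rcases eq_or_lt_of_le h with rfl | hlt
  · exact le_rfl
  · exact le_of_lt (M.closer_mono k j hk1 hlt hj2)

/-- Any position strictly between `closer (j-1)` and `closer j` is an opener with code `j`. -/
theorem pointAt {j p : ℕ} (hj1 : 1 ≤ j) (hj2 : j ≤ n)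
    (hp1 : M.closer (j - 1) < p) (hp2 : p < M.closer j) :
    ∃ a, 1 ≤ a ∧ a ≤ n ∧ M.opener a = p ∧ codeOf M a = j := by
  have hcl := M.closer_mem j hj1 hj2
  rw [Set.mem_Icc] at hcl
  have hp0 : 1 ≤ p := by
    rcases Nat.lt_or_ge j 2 with h | h
    · have h0 : j - 1 = 0 := by omega
      rw [h0, M.closer_eq_zero 0 (by simp)] at hp1
      omega
    · have := M.closer_mem (j-1) (by omega) (by omega)
      rw [Set.mem_Icc] at this
      omega
  obtain ⟨a, ha1, ha2, hor⟩ := M.cover p (Set.mem_Icc.2 ⟨hp0, by omega⟩)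
  rcases hor with hopen | hclose
  · refine ⟨a, ha1, ha2, hopen, ?_⟩
    have hle : codeOf M a ≤ j := codeOf_min M ha1 ha2 hj1 hj2 (by omega)
    have hsw := codeOf_sandwich M ha1 ha2
    by_contra hne
    have hlt : codeOf M a < j := by omega
    have : M.closer (codeOf M a) ≤ M.closer (j - 1) := by
      have := (codeOf_spec M ha1 ha2).1
      exact closer_mono' M (by omega) (by omega) (by omega)
    omega
  · exfalso
    rw [← hclose] at hp1 hp2
    have haj : a < j := closer_reflect M ha1 ha2 hj1 hj2 hp2
    rcases Nat.lt_or_ge j 2 with h | h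
    · omega
    · have := closer_reflect M (by omega : 1 ≤ j - 1) (by omega) ha1 ha2 hp1
      omega

end CodeOfLemmas

section NLNLemmas

variable {n : ℕ} {M : Matching n} (hM : M.NoLeftNesting)
include hM

/-- Within a fiber of the code, openers are ordered by arc label. -/
theorem fiber_lt_aux : ∀ x : ℕ, ∀ i m : ℕ, 1 ≤ i → i ≤ n → 1 ≤ m → m ≤ n →
    M.opener i = x → codeOf M m = codeOf M i → M.opener m < M.opener i → m < i := by
  intro x
  induction x using Nat.strong_induction_on with
  | _ x ih =>
    intro i m hi1 hi2 hm1 hm2 hx hcode hlt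
    obtain ⟨hswi1, hswi2⟩ := codeOf_sandwich M hi1 hi2
    obtain ⟨hswm1, hswm2⟩ := codeOf_sandwich M hm1 hm2
    rw [hcode] at hswm1 hswm2
    have hj1 : 1 ≤ codeOf M i := (codeOf_spec M hi1 hi2).1
    have hj2 : codeOf M i ≤ n := by
      have := (codeOf_spec M hi1 hi2).2.1
      omega
    have hp1 : M.closer (codeOf M i - 1) < M.opener i - 1 := by omega
    have hp2 : M.opener i - 1 < M.closer (codeOf M i) := by omega
    obtain ⟨a, ha1, ha2, hap, hacode⟩ := pointAt M hj1 hj2 hp1 hp2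
    have hai : a < i := by
      have hne : a ≠ i := by
        intro h
        rw [h] at hap
        omega
      have hopeq : M.opener i = M.opener a + 1 := by omega
      have h1 : ¬ (M.closer i < M.closer a) := fun hc => hM i a hi1 hi2 ha1 ha2 ⟨hopeq, hc⟩
      have h2 : M.closer a ≠ M.closer i := by
        intro h
        apply hne
        by_contra hne2
        rcases Nat.lt_or_ge a i with hlt2 | hge
        · have := M.closer_mono a i ha1 hlt2 hi2
          omega
        · have hlt3 : i < a := by omega
          have := M.closer_mono i a hi1 hlt3 ha2
          omega
      have : M.closer a < M.closer i := by omega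
      exact closer_reflect M ha1 ha2 hi1 hi2 this
    rcases Nat.lt_or_ge (M.opener m) (M.opener a) with hlt2 | hge
    · have := ih (M.opener a) (by omega) a m ha1 ha2 hm1 hm2 rfl
        (by rw [hacode, hcode]) hlt2
      omega
    · have heq : M.opener m = M.opener a := by omega
      have := M.opener_inj m a hm1 hm2 ha1 ha2 heq
      omega

theorem fiber_lt {i m : ℕ} (hi1 : 1 ≤ i) (hi2 : i ≤ n) (hm1 : 1 ≤ m) (hm2 : m ≤ n)
    (hcode : codeOf M m = codeOf M i) (hlt : M.opener m < M.opener i) : m < i :=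
  fiber_lt_aux hM (M.opener i) i m hi1 hi2 hm1 hm2 rfl hcode hlt

/-- In a fiber, label order and opener order agree. -/
theorem fiber_opener_lt {i m : ℕ} (hi1 : 1 ≤ i) (hi2 : i ≤ n) (hm1 : 1 ≤ m) (hm2 : m ≤ n)
    (hcode : codeOf M m = codeOf M i) (hlt : m < i) : M.opener m < M.opener i := by
  rcases Nat.lt_or_ge (M.opener m) (M.opener i) with h | h
  · exact h
  rcases Nat.eq_or_lt_of_le h with h' | h'
  · have := M.opener_inj i m hi1 hi2 hm1 hm2 h'
    omega
  · have := fiber_lt hM hm1 hm2 hi1 hi2 hcode.symm h'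
    omega

end NLNLemmas

section Formulas

variable {n : ℕ} (M : Matching n)

theorem pos_count {m : ℕ} (h1 : 1 ≤ m) (h2 : m ≤ 2*n) :
    m = ((Finset.Icc 1 n).filter (fun k => M.closer k ≤ m)).card
      + ((Finset.Icc 1 n).filter (fun i => M.opener i ≤ m)).card := by
  classical
  have hset : Finset.Icc 1 m =
      ((Finset.Icc 1 n).filter (fun k => M.closer k ≤ m)).image M.closer ∪
      ((Finset.Icc 1 n).filter (fun i => M.opener i ≤ m)).image M.opener := by
    apply Finset.ext
    intro x
    constructor
    · intro hx
      rw [Finset.mem_Icc] at hx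
      obtain ⟨a, ha1, ha2, hor⟩ := M.cover x (Set.mem_Icc.2 ⟨hx.1, by omega⟩)
      rw [Finset.mem_union]
      rcases hor with h | h
      · right
        rw [Finset.mem_image]
        exact ⟨a, Finset.mem_filter.2 ⟨Finset.mem_Icc.2 ⟨ha1, ha2⟩, by omega⟩, h⟩
      · left
        rw [Finset.mem_image]
        exact ⟨a, Finset.mem_filter.2 ⟨Finset.mem_Icc.2 ⟨ha1, ha2⟩, by omega⟩, h⟩
    · intro hx
      rw [Finset.mem_union] at hx
      rw [Finset.mem_Icc]
      rcases hx with h | h <;> rw [Finset.mem_image] at h <;> obtain ⟨a, ha, rfl⟩ := h <;>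
        rw [Finset.mem_filter, Finset.mem_Icc] at ha
      · have := M.closer_mem a ha.1.1 ha.1.2
        rw [Set.mem_Icc] at this
        exact ⟨this.1, ha.2⟩
      · have := M.opener_mem a ha.1.1 ha.1.2
        rw [Set.mem_Icc] at this
        exact ⟨this.1, ha.2⟩
  have hdisj : Disjoint
      (((Finset.Icc 1 n).filter (fun k => M.closer k ≤ m)).image M.closer)
      (((Finset.Icc 1 n).filter (fun i => M.opener i ≤ m)).image M.opener) := by
    rw [Finset.disjoint_left]
    intro x hx hx'
    rw [Finset.mem_image] at hx hx'
    obtain ⟨a, ha, hax⟩ := hx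
    obtain ⟨b, hb, hbx⟩ := hx'
    rw [Finset.mem_filter, Finset.mem_Icc] at ha hb
    exact M.opener_ne_closer b a hb.1.1 hb.1.2 ha.1.1 ha.1.2 (hbx.trans hax.symm)
  have hinj1 : Set.InjOn M.closer ((Finset.Icc 1 n).filter (fun k => M.closer k ≤ m)) := by
    intro a ha b hb hab
    rw [Finset.mem_coe, Finset.mem_filter, Finset.mem_Icc] at ha hb
    by_contra hne
    rcases Nat.lt_or_ge a b with h | h
    · have := M.closer_mono a b ha.1.1 h hb.1.2
      omega
    · have hlt : b < a := by omega
      have := M.closer_mono b a hb.1.1 hlt ha.1.2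
      omega
  have hinj2 : Set.InjOn M.opener ((Finset.Icc 1 n).filter (fun i => M.opener i ≤ m)) := by
    intro a ha b hb hab
    rw [Finset.mem_coe, Finset.mem_filter, Finset.mem_Icc] at ha hb
    exact M.opener_inj a b ha.1.1 ha.1.2 hb.1.1 hb.1.2 hab
  have := congrArg Finset.card hset
  rw [Nat.card_Icc, Finset.card_union_of_disjoint hdisj,
    Finset.card_image_of_injOn hinj1, Finset.card_image_of_injOn hinj2] at this
  omega

theorem closer_formula {j : ℕ} (hj1 : 1 ≤ j) (hj2 : j ≤ n) :
    M.closer j = j + ((Finset.Icc 1 n).filter (fun i => codeOf M i ≤ j)).card := by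
  have hcl := M.closer_mem j hj1 hj2
  rw [Set.mem_Icc] at hcl
  have hpc := pos_count M hcl.1 hcl.2
  have he1 : (Finset.Icc 1 n).filter (fun k => M.closer k ≤ M.closer j) = Finset.Icc 1 j := by
    apply Finset.ext
    intro k
    rw [Finset.mem_filter, Finset.mem_Icc, Finset.mem_Icc]
    constructor
    · rintro ⟨⟨hk1, hk2⟩, hk3⟩
      refine ⟨hk1, ?_⟩
      by_contra hc
      have := M.closer_mono j k hj1 (by omega) hk2
      omega
    · rintro ⟨hk1, hk2⟩
      exact ⟨⟨hk1, by omega⟩, closer_mono' M hk1 hk2 hj2⟩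
  have he2 : (Finset.Icc 1 n).filter (fun i => M.opener i ≤ M.closer j)
      = (Finset.Icc 1 n).filter (fun i => codeOf M i ≤ j) := by
    apply Finset.ext
    intro i
    rw [Finset.mem_filter, Finset.mem_filter, Finset.mem_Icc]
    constructor
    · rintro ⟨⟨hi1, hi2⟩, hi3⟩
      refine ⟨⟨hi1, hi2⟩, ?_⟩
      have hne : M.opener i ≠ M.closer j := M.opener_ne_closer i j hi1 hi2 hj1 hj2
      exact codeOf_min M hi1 hi2 hj1 hj2 (by omega)
    · rintro ⟨hi, hc⟩
      refine ⟨hi, ?_⟩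
      have hsw := (codeOf_spec M hi.1 hi.2).2.2
      have h1 : 1 ≤ codeOf M i := (codeOf_spec M hi.1 hi.2).1
      have := closer_mono' M h1 hc hj2
      omega
  rw [he1, he2, Nat.card_Icc] at hpc
  omega

theorem opener_formula (hM : M.NoLeftNesting) {i : ℕ} (hi1 : 1 ≤ i) (hi2 : i ≤ n) :
    M.opener i = (codeOf M i - 1) + ((Finset.Icc 1 n).filter
      (fun m => codeOf M m < codeOf M i ∨ (codeOf M m = codeOf M i ∧ m ≤ i))).card := by
  have hop := M.opener_mem i hi1 hi2
  rw [Set.mem_Icc] at hop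
  have hpc := pos_count M hop.1 hop.2
  have hci1 : 1 ≤ codeOf M i := (codeOf_spec M hi1 hi2).1
  have hci2 : codeOf M i ≤ n := by
    have := (codeOf_spec M hi1 hi2).2.1
    omega
  have hsw := codeOf_sandwich M hi1 hi2
  have he1 : (Finset.Icc 1 n).filter (fun k => M.closer k ≤ M.opener i)
      = Finset.Icc 1 (codeOf M i - 1) := by
    apply Finset.ext
    intro k
    rw [Finset.mem_filter, Finset.mem_Icc, Finset.mem_Icc]
    constructor
    · rintro ⟨⟨hk1, hk2⟩, hk3⟩
      refine ⟨hk1, ?_⟩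
      by_contra hc
      have hge : codeOf M i ≤ k := by omega
      have := closer_mono' M hci1 hge hk2
      omega
    · rintro ⟨hk1, hk2⟩
      refine ⟨⟨hk1, by omega⟩, ?_⟩
      have := closer_mono' M hk1 hk2 (le_trans (by omega) hci2)
      omega
  have he2 : (Finset.Icc 1 n).filter (fun m => M.opener m ≤ M.opener i)
      = (Finset.Icc 1 n).filter
        (fun m => codeOf M m < codeOf M i ∨ (codeOf M m = codeOf M i ∧ m ≤ i)) := by
    apply Finset.ext
    intro m
    rw [Finset.mem_filter, Finset.mem_filter, Finset.mem_Icc]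
    constructor
    · rintro ⟨⟨hm1, hm2⟩, hm3⟩
      refine ⟨⟨hm1, hm2⟩, ?_⟩
      have hle : codeOf M m ≤ codeOf M i := by
        apply codeOf_min M hm1 hm2 hci1 hci2
        omega
      rcases Nat.eq_or_lt_of_le hle with heq | hlt
      · refine Or.inr ⟨heq, ?_⟩
        rcases Nat.eq_or_lt_of_le hm3 with heq2 | hlt2
        · have := M.opener_inj m i hm1 hm2 hi1 hi2 heq2
          omega
        · exact le_of_lt (fiber_lt hM hi1 hi2 hm1 hm2 heq hlt2)
      · exact Or.inl hlt
    · rintro ⟨hm, hor⟩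
      refine ⟨hm, ?_⟩
      rcases hor with hlt | ⟨heq, hle⟩
      · have hswm := codeOf_sandwich M hm.1 hm.2
        have : M.closer (codeOf M m) ≤ M.closer (codeOf M i - 1) := by
          apply closer_mono' M (codeOf_spec M hm.1 hm.2).1 (by omega) (by omega)
        omega
      · rcases Nat.eq_or_lt_of_le hle with rfl | hlt2
        · exact le_rfl
        · exact le_of_lt (fiber_opener_lt hM hi1 hi2 hm.1 hm.2 heq hlt2)
  rw [he1, he2, Nat.card_Icc] at hpc
  omega

theorem matching_ext {M1 M2 : Matching n} (ho : M1.opener = M2.opener)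
    (hc : M1.closer = M2.closer) : M1 = M2 := by
  cases M1
  cases M2
  simp only at ho hc
  subst ho
  subst hc
  rfl

theorem toMatching_codeOf (hM : M.NoLeftNesting) :
    toMatching n (codeOf M) (codeOn_codeOf M) = M := by
  apply matching_ext
  · funext i
    show cop n (codeOf M) i = M.opener i
    by_cases h : 1 ≤ i ∧ i ≤ n
    · rw [cop_eq h.1 h.2, opener_formula M hM h.1 h.2]
    · rw [M.opener_eq_zero i (by rw [Set.mem_Icc]; omega)]
      simp only [cop, if_neg h]
  · funext j
    show ccl n (codeOf M) j = M.closer j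
    by_cases h : 1 ≤ j ∧ j ≤ n
    · rw [ccl_eq h.1 h.2, closer_formula M h.1 h.2]
    · rw [M.closer_eq_zero j (by rw [Set.mem_Icc]; omega)]
      simp only [ccl, if_neg h]

end Formulas

section Stats

variable {n : ℕ} {s : ℕ → ℕ}

theorem codeOf_toMatching (hs : CodeOn n s) : codeOf (toMatching n s hs) = s := by
  funext i
  by_cases h : 1 ≤ i ∧ i ≤ n
  · obtain ⟨hsi1, hsi2⟩ := hs.1 i h.1 h.2
    set M := toMatching n s hs with hMdef
    have hop : M.opener i = cop n s i := rfl
    have hcl : ∀ k, M.closer k = ccl n s k := fun k => rfl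
    apply le_antisymm
    · apply codeOf_min M h.1 h.2 hsi1 (by omega)
      rw [hop, hcl]
      exact cop_lt_ccl_code hs h.1 h.2
    · by_contra hc
      have hlt : codeOf M i < s i := by omega
      have h1 : 1 ≤ codeOf M i := (codeOf_spec M h.1 h.2).1
      have h2 := (codeOf_spec M h.1 h.2).2.2
      rw [hop, hcl] at h2
      have h3 : ccl n s (codeOf M i) ≤ ccl n s (s i - 1) := ccl_mono' h1 (by omega) (by omega)
      have h4 := ccl_pred_lt_cop hs h.1 h.2
      omega
  · have h2 := hs.2 i h
    simp only [codeOf, if_neg h, h2]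

variable {M : Matching n} (hM : M.NoLeftNesting)
include hM

theorem Lcr_eq : M.LcrSet = NMset n (codeOf M) := by
  apply Set.ext
  intro i
  simp only [Matching.LcrSet, NMset, isNM, Set.mem_setOf_eq]
  constructor
  · rintro ⟨hi1, hi2, u, hu1, hu2, hop, hop2, hcl⟩
    refine ⟨hi1, hi2, u, ?_, hu2, ?_⟩
    · -- c u = c i and then u > i
      have hci1 : 1 ≤ codeOf M i := (codeOf_spec M hi1 hi2).1
      have hci2 : codeOf M i ≤ n := by have := (codeOf_spec M hi1 hi2).2.1; omega
      have hswi := codeOf_sandwich M hi1 hi2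
      have hswu := codeOf_sandwich M hu1 hu2
      have hne : M.opener u ≠ M.closer (codeOf M i) :=
        M.opener_ne_closer u (codeOf M i) hu1 hu2 hci1 hci2
      have hle : codeOf M u ≤ codeOf M i := codeOf_min M hu1 hu2 hci1 hci2 (by omega)
      have hgt : codeOf M i - 1 < codeOf M u := by
        rcases Nat.lt_or_ge (codeOf M i) 2 with h | h
        · have := (codeOf_spec M hu1 hu2).1
          omega
        · by_contra hcon
          have : M.closer (codeOf M u) ≤ M.closer (codeOf M i - 1) :=
            closer_mono' M (codeOf_spec M hu1 hu2).1 (by omega) (by omega)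
          omega
      have hcueq : codeOf M u = codeOf M i := by omega
      have := fiber_lt hM hu1 hu2 hi1 hi2 hcueq.symm (by omega)
      exact this
    · symm
      have hci1 : 1 ≤ codeOf M i := (codeOf_spec M hi1 hi2).1
      have hci2 : codeOf M i ≤ n := by have := (codeOf_spec M hi1 hi2).2.1; omega
      have hswi := codeOf_sandwich M hi1 hi2
      have hswu := codeOf_sandwich M hu1 hu2
      have hne : M.opener u ≠ M.closer (codeOf M i) :=
        M.opener_ne_closer u (codeOf M i) hu1 hu2 hci1 hci2
      have hle : codeOf M u ≤ codeOf M i := codeOf_min M hu1 hu2 hci1 hci2 (by omega)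
      have hgt : codeOf M i - 1 < codeOf M u := by
        rcases Nat.lt_or_ge (codeOf M i) 2 with h | h
        · have := (codeOf_spec M hu1 hu2).1
          omega
        · by_contra hcon
          have : M.closer (codeOf M u) ≤ M.closer (codeOf M i - 1) :=
            closer_mono' M (codeOf_spec M hu1 hu2).1 (by omega) (by omega)
          omega
      omega
  · rintro ⟨hi1, hi2, m, hm1, hm2, hfib⟩
    refine ⟨hi1, hi2, ?_⟩
    have hci1 : 1 ≤ codeOf M i := (codeOf_spec M hi1 hi2).1
    have hci2 : codeOf M i ≤ n := by have := (codeOf_spec M hi1 hi2).2.1; omega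
    have hswi := codeOf_sandwich M hi1 hi2
    have hswm := codeOf_sandwich M (by omega : (1:ℕ) ≤ m) hm2
    rw [hfib] at hswm
    have hopm : M.opener i < M.opener m :=
      fiber_opener_lt hM (by omega) hm2 hi1 hi2 hfib.symm hm1
    -- the point opener i + 1
    obtain ⟨a, ha1, ha2, hap, hacode⟩ := pointAt M hci1 hci2
      (p := M.opener i + 1) (by omega) (by omega)
    have hai : i < a := by
      apply fiber_lt hM ha1 ha2 hi1 hi2
      · rw [hacode]
      · omega
    have hcii : codeOf M i ≤ i := (codeOf_spec M hi1 hi2).2.1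
    refine ⟨a, ha1, ha2, by omega, ?_, ?_⟩
    · -- opener a < closer i
      have : M.closer (codeOf M i) ≤ M.closer i := closer_mono' M hci1 hcii hi2
      omega
    · exact M.closer_mono i a hi1 hai ha2

theorem LRcr_eq : M.LRcrSet = Dset n (codeOf M) := by
  apply Set.ext
  intro i
  simp only [Matching.LRcrSet, Matching.RcrSet, Dset, isD, fibNonempty, Set.mem_setOf_eq]
  constructor
  · rintro ⟨⟨hi2, hin, hoplt, hopcl, hcleq⟩, hopeq⟩
    have hi1 : 1 ≤ i := by omega
    have hi1' : 1 ≤ i - 1 := by omega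
    have hin' : i - 1 ≤ n := by omega
    have hc1 := codeOf_spec M hi1' hin'
    have hc2 := codeOf_spec M hi1 hin
    have hsw1 := codeOf_sandwich M hi1' hin'
    have hsw2 := codeOf_sandwich M hi1 hin
    have hfib : codeOf M i = codeOf M (i-1) := by
      have hne : M.opener i ≠ M.closer (codeOf M (i-1)) :=
        M.opener_ne_closer i (codeOf M (i-1)) hi1 hin hc1.1 (by omega)
      have hle : codeOf M i ≤ codeOf M (i-1) :=
        codeOf_min M hi1 hin hc1.1 (by omega) (by omega)
      have hgt : codeOf M (i-1) - 1 < codeOf M i := by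
        rcases Nat.lt_or_ge (codeOf M (i-1)) 2 with h | h
        · omega
        · by_contra hcon
          have : M.closer (codeOf M i) ≤ M.closer (codeOf M (i-1) - 1) :=
            closer_mono' M hc2.1 (by omega) (by omega)
          omega
      omega
    refine ⟨hi2, hin, hfib, ?_⟩
    rintro ⟨m, hm1, hm2, hmc⟩
    have hswm := codeOf_sandwich M hm1 hm2
    rw [hmc] at hswm
    omega
  · rintro ⟨hi2, hin, hfib, hnofib⟩
    have hi1 : 1 ≤ i := by omega
    have hi1' : 1 ≤ i - 1 := by omega
    have hin' : i - 1 ≤ n := by omega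
    have hc1 := codeOf_spec M hi1' hin'
    have hc2 := codeOf_spec M hi1 hin
    have hsw1 := codeOf_sandwich M hi1' hin'
    have hsw2 := codeOf_sandwich M hi1 hin
    rw [hfib] at hsw2
    have hoplt : M.opener (i-1) < M.opener i :=
      fiber_opener_lt hM hi1 hin hi1' hin' hfib.symm (by omega)
    -- openers adjacent
    have hopeq : M.opener i = M.opener (i-1) + 1 := by
      by_contra hne
      obtain ⟨a, ha1, ha2, hap, hacode⟩ := pointAt M hc2.1 (by rw [hfib]; omega)
        (p := M.opener (i-1) + 1) (by rw [← hfib] at hsw1; omega) (by omega)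
      have hlow : i - 1 < a := by
        apply fiber_lt hM ha1 ha2 hi1' hin'
        · rw [hacode, hfib]
        · omega
      have hhigh : a < i := by
        apply fiber_lt hM hi1 hin ha1 ha2
        · rw [hacode, hfib]
        · omega
      omega
    -- closers adjacent
    have hcleq : M.closer i = M.closer (i-1) + 1 := by
      have hlt : M.closer (i-1) < M.closer i := M.closer_mono (i-1) i hi1' (by omega) hin
      by_contra hne
      -- point closer (i-1) + 1 lies strictly between closer (i-1) and closer i
      obtain ⟨a, ha1, ha2, hap, hacode⟩ := pointAt M hi1 hin
        (p := M.closer (i-1) + 1) (by omega) (by omega)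
      exact hnofib ⟨a, ha1, ha2, hacode⟩
    have hopcl : M.opener i < M.closer (i-1) := by
      have h1 : M.closer (codeOf M (i-1)) ≤ M.closer (i-1) :=
        closer_mono' M hc1.1 (by omega) hin'
      omega
    exact ⟨⟨hi2, hin, hoplt, hopcl, hcleq⟩, hopeq⟩

end Stats

end MatchAux

namespace PermSide

open PermAux

/-- Insert the value `N+1` after position `p` into a permutation of `{1,…,N}`. -/
def ins (N : ℕ) (f : ℕ → ℕ) (p : ℕ) : ℕ → ℕ := fun q =>
  if q ≤ p then f q else if q = p + 1 then N + 1 else if q ≤ N + 1 then f (q - 1) else 0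

/-- Remove the entry at position `p+1`. -/
def rem (N : ℕ) (g : ℕ → ℕ) (p : ℕ) : ℕ → ℕ := fun q =>
  if q ≤ p then g q else if q ≤ N then g (q + 1) else 0

variable {N : ℕ} {f g : ℕ → ℕ} {p : ℕ}

theorem ins_le {q : ℕ} (h : q ≤ p) : ins N f p q = f q := by simp [ins, h]

theorem ins_at : ins N f p (p+1) = N + 1 := by simp [ins]

theorem ins_gt {q : ℕ} (h : p + 2 ≤ q) (h2 : q ≤ N + 1) : ins N f p q = f (q - 1) := by
  have h3 : ¬ (q ≤ p) := by omega
  have h4 : ¬ (q = p + 1) := by omega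
  simp [ins, h3, h4, h2]

theorem ins_out {q : ℕ} (h : N + 2 ≤ q) (hp : p ≤ N) : ins N f p q = 0 := by
  have h3 : ¬ (q ≤ p) := by omega
  have h4 : ¬ (q = p + 1) := by omega
  have h5 : ¬ (q ≤ N + 1) := by omega
  simp [ins, h3, h4, h5]

theorem isPermOn_ins (hf : IsPermOn N f) (hp : p ≤ N) : IsPermOn (N+1) (ins N f p) := by
  have hfv : ∀ q, 1 ≤ q → q ≤ N → 1 ≤ f q ∧ f q ≤ N := fun q h1 h2 => mem_of_mem N hf h1 h2
  constructor
  · refine ⟨?_, ?_, ?_⟩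
    · -- MapsTo
      intro q hq
      rw [Set.mem_Icc] at hq
      rcases Nat.lt_or_ge p q with h | h
      · rcases Nat.eq_or_lt_of_le h with rfl | h2
        · rw [ins_at]
          exact Set.mem_Icc.2 ⟨by omega, le_rfl⟩
        · rw [ins_gt (by omega) hq.2]
          have := hfv (q-1) (by omega) (by omega)
          exact Set.mem_Icc.2 ⟨by omega, by omega⟩
      · rw [ins_le h]
        have := hfv q hq.1 (by omega)
        exact Set.mem_Icc.2 ⟨by omega, by omega⟩
    · -- InjOn
      intro a ha b hb hab
      rw [Set.mem_Icc] at ha hb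
      have key : ∀ x, 1 ≤ x → x ≤ N + 1 → x ≠ p + 1 → 1 ≤ ins N f p x ∧ ins N f p x ≤ N := by
        intro x h1 h2 h3
        rcases Nat.lt_or_ge p x with h | h
        · rw [ins_gt (by omega) h2]
          exact hfv (x-1) (by omega) (by omega)
        · rw [ins_le h]
          exact hfv x h1 (by omega)
      by_cases hap : a = p + 1
      · by_cases hbp : b = p + 1
        · rw [hap, hbp]
        · rw [hap, ins_at] at hab
          have := key b hb.1 hb.2 hbp
          omega
      · by_cases hbp : b = p + 1
        · rw [hbp, ins_at] at hab
          have := key a ha.1 ha.2 hap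
          omega
        · -- both are f-values
          have hav : ins N f p a = f (if a ≤ p then a else a - 1) := by
            split
            · exact ins_le (by omega)
            · exact ins_gt (by omega) ha.2
          have hbv : ins N f p b = f (if b ≤ p then b else b - 1) := by
            split
            · exact ins_le (by omega)
            · exact ins_gt (by omega) hb.2
          rw [hav, hbv] at hab
          have ha' : 1 ≤ (if a ≤ p then a else a - 1) ∧ (if a ≤ p then a else a - 1) ≤ N := by
            split <;> omega
          have hb' : 1 ≤ (if b ≤ p then b else b - 1) ∧ (if b ≤ p then b else b - 1) ≤ N := by
            split <;> omega
          have := injOn N hf ha'.1 ha'.2 hb'.1 hb'.2 hab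
          split at this <;> split at this <;> omega
    · -- SurjOn
      intro v hv
      rw [Set.mem_Icc] at hv
      by_cases hvN : v = N + 1
      · exact ⟨p+1, Set.mem_Icc.2 ⟨by omega, by omega⟩, by rw [ins_at, hvN]⟩
      · obtain ⟨q, hq1, hq2, hq3⟩ := surjOn N hf hv.1 (by omega)
        rcases Nat.lt_or_ge p q with h | h
        · exact ⟨q + 1, Set.mem_Icc.2 ⟨by omega, by omega⟩,
            by rw [ins_gt (by omega) (by omega)]; simpa using hq3⟩
        · exact ⟨q, Set.mem_Icc.2 ⟨hq1, by omega⟩, by rw [ins_le h]; exact hq3⟩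
  · intro q hq
    rw [Set.mem_Icc] at hq
    rcases Nat.lt_or_ge q 1 with h | h
    · have hq0 : q = 0 := by omega
      rw [hq0, ins_le (by omega)]
      exact hf.2 0 (by simp)
    · exact ins_out (by omega) hp

theorem rem_ins (hf : IsPermOn N f) (hp : p ≤ N) : rem N (ins N f p) p = f := by
  funext q
  rcases Nat.lt_or_ge p q with h | h
  · rcases Nat.lt_or_ge N q with h2 | h2
    · have : rem N (ins N f p) p q = 0 := by
        simp only [rem]
        rw [if_neg (by omega), if_neg (by omega)]
      rw [this, hf.2 q (by rw [Set.mem_Icc]; omega)]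
    · have : rem N (ins N f p) p q = ins N f p (q+1) := by
        simp only [rem]
        rw [if_neg (by omega), if_pos h2]
      rw [this, ins_gt (by omega) (by omega)]
      simp
  · have : rem N (ins N f p) p q = ins N f p q := by
      simp only [rem]
      rw [if_pos h]
    rw [this, ins_le h]

theorem ins_rem (hg : IsPermOn (N+1) g) (hp : p ≤ N) (hgp : g (p+1) = N+1) :
    ins N (rem N g p) p = g := by
  funext q
  rcases Nat.lt_or_ge p q with h | h
  · rcases Nat.eq_or_lt_of_le h with rfl | h2
    · rw [ins_at, hgp]
    · rcases Nat.lt_or_ge (N+1) q with h3 | h3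
      · rw [ins_out (by omega) hp, hg.2 q (by rw [Set.mem_Icc]; omega)]
      · rw [ins_gt (by omega) h3]
        simp only [rem]
        rw [if_neg (by omega), if_pos (by omega : q - 1 ≤ N)]
        congr 1
        omega
  · rw [ins_le h]
    simp only [rem]
    rw [if_pos h]

theorem isPermOn_rem (hg : IsPermOn (N+1) g) (hp : p ≤ N) (hgp : g (p+1) = N+1) :
    IsPermOn N (rem N g p) := by
  have hgv : ∀ q, 1 ≤ q → q ≤ N + 1 → 1 ≤ g q ∧ g q ≤ N + 1 := fun q h1 h2 =>
    mem_of_mem (N+1) hg h1 h2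
  have hgne : ∀ q, 1 ≤ q → q ≤ N + 1 → q ≠ p + 1 → g q ≤ N := by
    intro q h1 h2 h3
    have := hgv q h1 h2
    rcases Nat.eq_or_lt_of_le this.2 with heq | hlt
    · exfalso
      exact h3 (injOn (N+1) hg h1 h2 (by omega) (by omega) (heq.trans hgp.symm))
    · omega
  have hval : ∀ q, 1 ≤ q → q ≤ N → rem N g p q = g (if q ≤ p then q else q + 1) := by
    intro q h1 h2
    simp only [rem]
    split
    · rfl
    · simp [h2]
  constructor
  · refine ⟨?_, ?_, ?_⟩
    · intro q hq
      rw [Set.mem_Icc] at hq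
      rw [hval q hq.1 hq.2]
      have h1 : 1 ≤ (if q ≤ p then q else q + 1) := by split <;> omega
      have h2 : (if q ≤ p then q else q + 1) ≤ N + 1 := by split <;> omega
      have h3 : (if q ≤ p then q else q + 1) ≠ p + 1 := by split <;> omega
      have := hgv _ h1 h2
      have := hgne _ h1 h2 h3
      exact Set.mem_Icc.2 ⟨by omega, by omega⟩
    · intro a ha b hb hab
      rw [Set.mem_Icc] at ha hb
      rw [hval a ha.1 ha.2, hval b hb.1 hb.2] at hab
      have h1a : 1 ≤ (if a ≤ p then a else a + 1) := by split <;> omega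
      have h2a : (if a ≤ p then a else a + 1) ≤ N + 1 := by split <;> omega
      have h1b : 1 ≤ (if b ≤ p then b else b + 1) := by split <;> omega
      have h2b : (if b ≤ p then b else b + 1) ≤ N + 1 := by split <;> omega
      have := injOn (N+1) hg h1a h2a h1b h2b hab
      split at this <;> split at this <;> omega
    · intro v hv
      rw [Set.mem_Icc] at hv
      obtain ⟨q, hq1, hq2, hq3⟩ := surjOn (N+1) hg hv.1 (by omega)
      have hqne : q ≠ p + 1 := by
        intro h
        rw [h, hgp] at hq3
        omega
      rcases Nat.lt_or_ge p q with h | h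
      · refine ⟨q - 1, Set.mem_Icc.2 ⟨by omega, by omega⟩, ?_⟩
        rw [hval (q-1) (by omega) (by omega), if_neg (by omega)]
        rw [show q - 1 + 1 = q by omega]
        exact hq3
      · refine ⟨q, Set.mem_Icc.2 ⟨hq1, by omega⟩, ?_⟩
        rw [hval q hq1 (by omega), if_pos h]
        exact hq3
  · intro q hq
    rw [Set.mem_Icc] at hq
    rcases Nat.lt_or_ge q 1 with h | h
    · have hq0 : q = 0 := by omega
      simp only [rem, hq0]
      split
      · exact hg.2 0 (by simp)
      · split
        · exact hg.2 1 (by rw [Set.mem_Icc]; omega)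
        · rfl
    · simp only [rem]
      rw [if_neg (by omega), if_neg (by omega)]

theorem ins_eq_max_iff (hf : IsPermOn N f) (hp : p ≤ N) {q : ℕ} (h1 : 1 ≤ q)
    (h2 : q ≤ N + 1) : ins N f p q = N + 1 ↔ q = p + 1 := by
  constructor
  · intro h
    by_contra hne
    rcases Nat.lt_or_ge p q with hlt | hle
    · rw [ins_gt (by omega) h2] at h
      have := mem_of_mem N hf (j := q - 1) (by omega) (by omega)
      omega
    · rw [ins_le hle] at h
      have := mem_of_mem N hf h1 (by omega)
      omega
  · intro h
    rw [h, ins_at]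

end PermSide

namespace PermSide

open PermAux

variable {N : ℕ} {f : ℕ → ℕ} {p : ℕ}

theorem ascBottom_ins (hf : IsPermOn N f) (hp1 : 1 ≤ p) (hp2 : p ≤ N) :
    permAscBottom (N+1) (ins N f p) = permAscBottom N f ∪ {f p} := by
  apply Set.ext
  intro v
  simp only [permAscBottom, Set.mem_setOf_eq, Set.mem_union, Set.mem_singleton_iff]
  constructor
  · rintro ⟨j, hj1, hj2, hasc, hv⟩
    rcases Nat.lt_or_ge j p with hcase | hcase
    · have e1 : ins N f p j = f j := ins_le (by omega)
      have e2 : ins N f p (j+1) = f (j+1) := ins_le (by omega)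
      rw [e1, e2] at hasc
      rw [e1] at hv
      exact Or.inl ⟨j, hj1, by omega, hasc, hv⟩
    rcases Nat.eq_or_lt_of_le hcase with hj | hcase2
    · have e1 : ins N f p j = f j := ins_le (by omega)
      rw [e1] at hv
      rw [← hj] at hv
      exact Or.inr hv
    rcases Nat.eq_or_lt_of_le hcase2 with hj | hcase3
    · exfalso
      have e1 : ins N f p j = N + 1 := by rw [← hj]; exact ins_at
      have e2 : ins N f p (j+1) = f j := by
        rw [ins_gt (by omega) (by omega)]
        try congr 1
        try omega
      rw [e1, e2] at hasc
      have := mem_of_mem N hf (j := j) (by omega) (by omega)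
      omega
    · have e1 : ins N f p j = f (j-1) := ins_gt (by omega) (by omega)
      have e2 : ins N f p (j+1) = f j := by
        rw [ins_gt (by omega) (by omega)]
        try congr 1
        try omega
      rw [e1, e2] at hasc
      rw [e1] at hv
      refine Or.inl ⟨j - 1, by omega, by omega, ?_, hv⟩
      have h1 : j - 1 + 1 = j := by omega
      rw [h1]
      exact hasc
  · rintro (⟨j, hj1, hj2, hasc, hv⟩ | hv)
    · rcases Nat.lt_or_ge j p with hcase | hcase
      · have e1 : ins N f p j = f j := ins_le (by omega)
        have e2 : ins N f p (j+1) = f (j+1) := ins_le (by omega)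
        exact ⟨j, hj1, by omega, by rw [e1, e2]; exact hasc, by rw [e1]; exact hv⟩
      rcases Nat.eq_or_lt_of_le hcase with hj | hcase2
      · -- j = p : f p is an ascent bottom in the new permutation anyway
        refine ⟨j, hj1, by omega, ?_, ?_⟩
        · have e1 : ins N f p j = f j := ins_le (by omega)
          have e2 : ins N f p (j+1) = N + 1 := by rw [← hj]; exact ins_at
          rw [e1, e2]
          have := mem_of_mem N hf hj1 (by omega)
          omega
        · rw [ins_le (by omega)]
          exact hv
      · refine ⟨j + 1, by omega, by omega, ?_, ?_⟩
        · have e1 : ins N f p (j+1) = f j := by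
            rw [ins_gt (by omega) (by omega)]
            try congr 1
            try omega
          have e2 : ins N f p (j+1+1) = f (j+1) := by
            rw [ins_gt (by omega) (by omega)]
            try congr 1
            try omega
          rw [e1, e2]
          exact hasc
        · have e1 : ins N f p (j+1) = f j := by
            rw [ins_gt (by omega) (by omega)]
            try congr 1
            try omega
          rw [e1]
          exact hv
    · refine ⟨p, hp1, by omega, ?_, ?_⟩
      · have e1 : ins N f p p = f p := ins_le le_rfl
        have e2 : ins N f p (p+1) = N + 1 := ins_at
        rw [e1, e2]
        have := mem_of_mem N hf hp1 hp2
        omega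
      · rw [ins_le le_rfl]
        exact hv

theorem ascBottom_ins0 (hf : IsPermOn N f) :
    permAscBottom (N+1) (ins N f 0) = permAscBottom N f := by
  apply Set.ext
  intro v
  simp only [permAscBottom, Set.mem_setOf_eq]
  constructor
  · rintro ⟨j, hj1, hj2, hasc, hv⟩
    rcases Nat.eq_or_lt_of_le hj1 with hj | hj
    · exfalso
      have e1 : ins N f 0 j = N + 1 := by rw [← hj]; exact ins_at
      have e2 : ins N f 0 (j+1) = f j := by
        rw [ins_gt (by omega) (by omega)]
        try congr 1
        try omega
      rw [e1, e2] at hasc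
      have := mem_of_mem N hf (j := j) (by omega) (by omega)
      omega
    · have e1 : ins N f 0 j = f (j-1) := ins_gt (by omega) (by omega)
      have e2 : ins N f 0 (j+1) = f j := by
        rw [ins_gt (by omega) (by omega)]
        try congr 1
        try omega
      rw [e1, e2] at hasc
      rw [e1] at hv
      refine ⟨j - 1, by omega, by omega, ?_, hv⟩
      have h1 : j - 1 + 1 = j := by omega
      rw [h1]
      exact hasc
  · rintro ⟨j, hj1, hj2, hasc, hv⟩
    refine ⟨j + 1, by omega, by omega, ?_, ?_⟩
    · have e1 : ins N f 0 (j+1) = f j := by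
        rw [ins_gt (by omega) (by omega)]
        try congr 1
        try omega
      have e2 : ins N f 0 (j+1+1) = f (j+1) := by
        rw [ins_gt (by omega) (by omega)]
        try congr 1
        try omega
      rw [e1, e2]
      exact hasc
    · have e1 : ins N f 0 (j+1) = f j := by
        rw [ins_gt (by omega) (by omega)]
        try congr 1
        try omega
      rw [e1]
      exact hv

theorem adjAsc_ins (hf : IsPermOn N f) (hp1 : 1 ≤ p) (hp2 : p ≤ N) :
    permAdjAsc (N+1) (ins N f p) =
      (permAdjAsc N f \ {f p + 1}) ∪ {v | f p = N ∧ v = N + 1} := by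
  apply Set.ext
  intro v
  simp only [permAdjAsc, Set.mem_setOf_eq, Set.mem_union, Set.mem_diff,
    Set.mem_singleton_iff]
  constructor
  · rintro ⟨j, hj1, hj2, heq, hv⟩
    rcases Nat.lt_or_ge j (p+1) with hcase | hcase
    · -- j ≤ p
      have e1 : ins N f p (j-1) = f (j-1) := ins_le (by omega)
      have e2 : ins N f p j = f j := ins_le (by omega)
      rw [e1, e2] at heq
      rw [e2] at hv
      refine Or.inl ⟨⟨j, hj1, by omega, heq, hv⟩, ?_⟩
      intro hcon
      rw [hv] at hcon
      have hfj : f (j - 1) = f p := by omega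
      have := injOn N hf (i := j - 1) (by omega) (by omega) hp1 hp2 hfj
      omega
    rcases Nat.eq_or_lt_of_le hcase with hj | hcase2
    · right
      have e1 : ins N f p j = N + 1 := by rw [← hj]; exact ins_at
      have e2 : ins N f p (j-1) = f p := by
        have : j - 1 = p := by omega
        rw [this]
        exact ins_le le_rfl
      rw [e1, e2] at heq
      rw [e1] at hv
      exact ⟨by omega, hv⟩
    rcases Nat.eq_or_lt_of_le hcase2 with hj | hcase3
    · exfalso
      have e1 : ins N f p (j-1) = N + 1 := by
        have : j - 1 = p + 1 := by omega
        rw [this]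
        exact ins_at
      have e2 : ins N f p j = f (j-1) := ins_gt (by omega) (by omega)
      rw [e1, e2] at heq
      have := mem_of_mem N hf (j := j - 1) (by omega) (by omega)
      omega
    · -- j ≥ p + 3
      have e1 : ins N f p (j-1) = f (j-2) := by
        rw [ins_gt (by omega) (by omega)]
        try congr 1
        try omega
      have e2 : ins N f p j = f (j-1) := ins_gt (by omega) (by omega)
      rw [e1, e2] at heq
      rw [e2] at hv
      refine Or.inl ⟨⟨j - 1, by omega, by omega, ?_, hv⟩, ?_⟩
      · have h1 : j - 1 - 1 = j - 2 := by omega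
        rw [h1]
        exact heq
      · intro hcon
        rw [hv] at hcon
        have hfj : f (j - 2) = f p := by omega
        have := injOn N hf (i := j - 2) (by omega) (by omega) hp1 hp2 hfj
        omega
  · rintro (⟨⟨j, hj1, hj2, heq, hv⟩, hne⟩ | ⟨hfp, hv⟩)
    · have hjne : j ≠ p + 1 := by
        intro hcon
        apply hne
        rw [hv, ← heq, hcon]
        simp
      rcases Nat.lt_or_ge j (p+1) with hcase | hcase
      · have e1 : ins N f p (j-1) = f (j-1) := ins_le (by omega)
        have e2 : ins N f p j = f j := ins_le (by omega)
        exact ⟨j, hj1, by omega, by rw [e1, e2]; exact heq, by rw [e2]; exact hv⟩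
      · have hj3 : p + 2 ≤ j := by omega
        refine ⟨j + 1, by omega, by omega, ?_, ?_⟩
        · have e1 : ins N f p (j+1-1) = f (j-1) := by
            rw [show j + 1 - 1 = j by omega]
            exact ins_gt (by omega) (by omega)
          have e2 : ins N f p (j+1) = f j := by
            rw [ins_gt (by omega) (by omega)]
            try congr 1
            try omega
          rw [e1, e2]
          exact heq
        · have e2 : ins N f p (j+1) = f j := by
            rw [ins_gt (by omega) (by omega)]
            try congr 1
            try omega
          rw [e2]
          exact hv
    · refine ⟨p + 1, by omega, by omega, ?_, ?_⟩
      · have e1 : ins N f p (p+1-1) = f p := by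
          rw [show p + 1 - 1 = p by omega]
          exact ins_le le_rfl
        rw [e1, ins_at, hfp]
      · rw [ins_at, hv]

theorem adjAsc_ins0 (hf : IsPermOn N f) :
    permAdjAsc (N+1) (ins N f 0) = permAdjAsc N f := by
  apply Set.ext
  intro v
  simp only [permAdjAsc, Set.mem_setOf_eq]
  constructor
  · rintro ⟨j, hj1, hj2, heq, hv⟩
    rcases Nat.eq_or_lt_of_le hj1 with hj | hcase
    · exfalso
      have e1 : ins N f 0 (j-1) = N + 1 := by
        have : j - 1 = 0 + 1 := by omega
        rw [this]
        exact ins_at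
      have e2 : ins N f 0 j = f (j-1) := ins_gt (by omega) (by omega)
      rw [e1, e2] at heq
      have := mem_of_mem N hf (j := j - 1) (by omega) (by omega)
      omega
    · have e1 : ins N f 0 (j-1) = f (j-2) := by
        rw [ins_gt (by omega) (by omega)]
        try congr 1
        try omega
      have e2 : ins N f 0 j = f (j-1) := ins_gt (by omega) (by omega)
      rw [e1, e2] at heq
      rw [e2] at hv
      refine ⟨j - 1, by omega, by omega, ?_, hv⟩
      have h1 : j - 1 - 1 = j - 2 := by omega
      rw [h1]
      exact heq
  · rintro ⟨j, hj1, hj2, heq, hv⟩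
    refine ⟨j + 1, by omega, by omega, ?_, ?_⟩
    · have e1 : ins N f 0 (j+1-1) = f (j-1) := by
        rw [show j + 1 - 1 = j by omega]
        exact ins_gt (by omega) (by omega)
      have e2 : ins N f 0 (j+1) = f j := by
        rw [ins_gt (by omega) (by omega)]
        try congr 1
        try omega
      rw [e1, e2]
      exact heq
    · have e2 : ins N f 0 (j+1) = f j := by
        rw [ins_gt (by omega) (by omega)]
        try congr 1
        try omega
      rw [e2]
      exact hv

end PermSide

namespace PermSide

open PermAux

variable {N : ℕ} {t f : ℕ → ℕ}

/-- Largest element of the fiber of `j`. -/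
noncomputable def mfib (N : ℕ) (t : ℕ → ℕ) (j : ℕ) : ℕ :=
  Nat.findGreatest (fun m => t m = j) N

open Classical in
theorem mfib_spec (ht : CodeOn N t) {j : ℕ} (hj : 1 ≤ j) (hfib : fibNonempty N t j) :
    1 ≤ mfib N t j ∧ mfib N t j ≤ N ∧ t (mfib N t j) = j ∧
      ∀ m, mfib N t j < m → m ≤ N → t m ≠ j := by
  obtain ⟨m, hm1, hm2, hm3⟩ := hfib
  have hspec : t (mfib N t j) = j := Nat.findGreatest_spec (P := fun m => t m = j) hm2 hm3
  have hle : mfib N t j ≤ N := Nat.findGreatest_le N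
  have hpos : 1 ≤ mfib N t j := by
    by_contra h
    have h0 : mfib N t j = 0 := by omega
    rw [h0] at hspec
    have := ht.2 0 (by omega)
    omega
  refine ⟨hpos, hle, hspec, ?_⟩
  intro m' hm'1 hm'2 hm'3
  have : m' ≤ mfib N t j := Nat.le_findGreatest (P := fun m => t m = j) hm'2 hm'3
  omega

open Classical in
noncomputable def RJset (N : ℕ) (t : ℕ → ℕ) : Finset ℕ :=
  (Finset.Icc 1 (N+1)).filter (fun j => ¬ fibNonempty N t j ∧ ¬ isD N t j)

open Classical in
noncomputable def NMP (N : ℕ) (t : ℕ → ℕ) : Finset ℕ :=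
  (Finset.Icc 1 N).filter (fun v => isNM N t v ∧ ¬ isD N t (v+1))

noncomputable def Pset (N : ℕ) (t f : ℕ → ℕ) : Finset ℕ :=
  insert 0 ((NMP N t).image (posOf N f))

open Classical in
noncomputable def bmap (A B : Finset ℕ) (j : ℕ) : ℕ :=
  if h : A.card = B.card ∧ j ∈ A then ((Finset.equivOfCardEq h.1) ⟨j, h.2⟩ : ℕ) else 0

theorem bmap_mem {A B : Finset ℕ} (h : A.card = B.card) {j : ℕ} (hj : j ∈ A) :
    bmap A B j ∈ B := by
  rw [bmap, dif_pos ⟨h, hj⟩]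
  exact Subtype.coe_prop _

theorem bmap_inj {A B : Finset ℕ} (h : A.card = B.card) {j1 j2 : ℕ} (hj1 : j1 ∈ A)
    (hj2 : j2 ∈ A) (heq : bmap A B j1 = bmap A B j2) : j1 = j2 := by
  rw [bmap, dif_pos ⟨h, hj1⟩, bmap, dif_pos ⟨h, hj2⟩] at heq
  have := (Finset.equivOfCardEq h).injective (Subtype.ext heq)
  exact congrArg Subtype.val this

theorem bmap_surj {A B : Finset ℕ} (h : A.card = B.card) {b : ℕ} (hb : b ∈ B) :
    ∃ j ∈ A, bmap A B j = b := by
  obtain ⟨a, ha⟩ := (Finset.equivOfCardEq h).surjective ⟨b, hb⟩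
  refine ⟨a.1, a.2, ?_⟩
  rw [bmap, dif_pos ⟨h, a.2⟩]
  simp [ha]

open Classical in
theorem card_RJ_P (ht : CodeOn N t) (hf : IsPermOn N f) :
    (RJset N t).card = (Pset N t f).card := by
  set A := (Finset.Icc 1 (N+1)).filter (fun j => fibNonempty N t j) with hA
  set B := (Finset.Icc 1 (N+1)).filter (fun j => isD N t j) with hB
  set Maxtot := (Finset.Icc 1 N).filter (fun m => ¬ isNM N t m) with hMax
  set NMtot := (Finset.Icc 1 N).filter (fun m => isNM N t m) with hNM
  set Ddec := (Finset.Icc 1 N).filter (fun v => isNM N t v ∧ isD N t (v+1)) with hDd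
  -- partition of Icc 1 (N+1)
  have h1 : ((Finset.Icc 1 (N+1)).filter (fun j => fibNonempty N t j ∨ isD N t j)).card
      + (RJset N t).card = N + 1 := by
    have := Finset.card_filter_add_card_filter_not
      (s := Finset.Icc 1 (N+1)) (p := fun j => fibNonempty N t j ∨ isD N t j)
    rw [Nat.card_Icc] at this
    have he : (Finset.Icc 1 (N+1)).filter (fun j => ¬(fibNonempty N t j ∨ isD N t j))
        = RJset N t := by
      rw [RJset]
      apply Finset.filter_congr
      intro x _
      tauto
    rw [he] at this
    omega
  have h2 : ((Finset.Icc 1 (N+1)).filter (fun j => fibNonempty N t j ∨ isD N t j)).card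
      = A.card + B.card := by
    rw [Finset.filter_or, Finset.card_union_of_disjoint]
    rw [Finset.disjoint_left]
    intro x hx hx'
    rw [Finset.mem_filter] at hx hx'
    exact hx'.2.2.2.2 hx.2
  -- A ↔ Maxtot
  have h3 : A = Maxtot.image t := by
    apply Finset.ext
    intro j
    rw [hA, hMax, Finset.mem_filter, Finset.mem_image, Finset.mem_Icc]
    constructor
    · rintro ⟨hj, hfib⟩
      obtain ⟨hm1, hm2, hm3, hm4⟩ := mfib_spec ht (by omega) hfib
      refine ⟨mfib N t j, ?_, hm3⟩
      rw [Finset.mem_filter, Finset.mem_Icc]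
      refine ⟨⟨hm1, hm2⟩, ?_⟩
      rintro ⟨_, _, m2, hlt, hle, heq⟩
      rw [hm3] at heq
      exact hm4 m2 hlt hle heq
    · rintro ⟨m, hm, rfl⟩
      rw [Finset.mem_filter, Finset.mem_Icc] at hm
      have := ht.1 m hm.1.1 hm.1.2
      exact ⟨⟨by omega, by omega⟩, ⟨m, hm.1.1, hm.1.2, rfl⟩⟩
  have h4 : A.card = Maxtot.card := by
    rw [h3]
    apply Finset.card_image_of_injOn
    intro a ha b hb hab
    rw [Finset.mem_coe, Finset.mem_filter, Finset.mem_Icc] at ha hb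
    by_contra hne
    rcases Nat.lt_or_ge a b with h | h
    · exact ha.2 ⟨ha.1.1, ha.1.2, b, h, hb.1.2, hab.symm⟩
    · exact hb.2 ⟨hb.1.1, hb.1.2, a, by omega, ha.1.2, hab⟩
  -- B ↔ Ddec
  have h5 : B = Ddec.image (fun v => v + 1) := by
    apply Finset.ext
    intro j
    rw [hB, hDd, Finset.mem_filter, Finset.mem_image, Finset.mem_Icc]
    constructor
    · rintro ⟨hj, hD⟩
      obtain ⟨hD1, hD2, hD3, hD4⟩ := hD
      refine ⟨j - 1, ?_, by omega⟩
      rw [Finset.mem_filter, Finset.mem_Icc]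
      refine ⟨⟨by omega, by omega⟩, ⟨by omega, by omega, j, by omega, hD2, hD3⟩, ?_⟩
      rw [show j - 1 + 1 = j by omega]
      exact ⟨hD1, hD2, hD3, hD4⟩
    · rintro ⟨v, hv, rfl⟩
      rw [Finset.mem_filter, Finset.mem_Icc] at hv
      have hD := hv.2.2
      exact ⟨⟨by omega, by omega⟩, hD⟩
  have h6 : B.card = Ddec.card := by
    rw [h5]
    apply Finset.card_image_of_injOn
    intro a _ b _ hab
    simpa using hab
  -- NMtot partition
  have h7 : NMtot.card + Maxtot.card = N := by
    have := Finset.card_filter_add_card_filter_not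
      (s := Finset.Icc 1 N) (p := fun m => isNM N t m)
    rw [Nat.card_Icc] at this
    rw [hNM, hMax]
    omega
  have h8 : (NMP N t).card + Ddec.card = NMtot.card := by
    have := Finset.card_filter_add_card_filter_not
      (s := NMtot) (p := fun v => isD N t (v+1))
    have e1 : NMtot.filter (fun v => isD N t (v+1)) = Ddec := by
      rw [hNM, hDd, Finset.filter_filter]
    have e2 : NMtot.filter (fun v => ¬ isD N t (v+1)) = NMP N t := by
      rw [hNM, NMP, Finset.filter_filter]
    rw [e1, e2] at this
    omega
  -- Pset card
  have h9 : (Pset N t f).card = (NMP N t).card + 1 := by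
    have hnot : 0 ∉ (NMP N t).image (posOf N f) := by
      intro h0
      rw [Finset.mem_image] at h0
      obtain ⟨v, hv, hv0⟩ := h0
      rw [NMP, Finset.mem_filter, Finset.mem_Icc] at hv
      have := (posOf_spec N hf hv.1.1 hv.1.2).1
      omega
    have hinj : Set.InjOn (posOf N f) (NMP N t) := by
      intro a ha b hb hab
      rw [Finset.mem_coe, NMP, Finset.mem_filter, Finset.mem_Icc] at ha hb
      have ha' := (posOf_spec N hf ha.1.1 ha.1.2).2.2
      have hb' := (posOf_spec N hf hb.1.1 hb.1.2).2.2
      rw [← ha', ← hb', hab]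
    rw [Pset, Finset.card_insert_of_notMem hnot, Finset.card_image_of_injOn hinj]
  omega

-- The slot (insertion position) associated to the code entry `j`.
open Classical in
noncomputable def slot (N : ℕ) (t f : ℕ → ℕ) (j : ℕ) : ℕ :=
  if fibNonempty N t j then posOf N f (mfib N t j)
  else if isD N t j then posOf N f (j - 1)
  else bmap (RJset N t) (Pset N t f) j

end PermSide

namespace PermSide

open PermAux

variable {N : ℕ} {t f : ℕ → ℕ}

theorem isD_isNM {j : ℕ} (h : isD N t j) : isNM N t (j-1) := by
  obtain ⟨h1, h2, h3, _⟩ := h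
  exact ⟨by omega, by omega, j, by omega, h2, h3⟩

theorem mfib_not_isNM (ht : CodeOn N t) {j : ℕ} (hj : 1 ≤ j) (hfib : fibNonempty N t j) :
    ¬ isNM N t (mfib N t j) := by
  obtain ⟨h1, h2, h3, h4⟩ := mfib_spec ht hj hfib
  rintro ⟨_, _, m, hm1, hm2, hm3⟩
  rw [h3] at hm3
  exact h4 m hm1 hm2 hm3

open Classical in
theorem mem_RJset {j : ℕ} (hj1 : 1 ≤ j) (hj2 : j ≤ N + 1) (h1 : ¬ fibNonempty N t j)
    (h2 : ¬ isD N t j) : j ∈ RJset N t := by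
  rw [RJset, Finset.mem_filter, Finset.mem_Icc]
  exact ⟨⟨hj1, hj2⟩, h1, h2⟩

open Classical in
theorem Pset_cases (hf : IsPermOn N f) {x : ℕ} (hx : x ∈ Pset N t f) :
    x = 0 ∨ ∃ v, 1 ≤ v ∧ v ≤ N ∧ isNM N t v ∧ ¬ isD N t (v+1) ∧ x = posOf N f v ∧
      f x = v ∧ 1 ≤ x ∧ x ≤ N := by
  rw [Pset, Finset.mem_insert] at hx
  rcases hx with h | h
  · exact Or.inl h
  · right
    rw [Finset.mem_image] at h
    obtain ⟨v, hv, hvx⟩ := h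
    rw [NMP, Finset.mem_filter, Finset.mem_Icc] at hv
    obtain ⟨⟨hv1, hv2⟩, hv3, hv4⟩ := hv
    obtain ⟨hp1, hp2, hp3⟩ := posOf_spec N hf hv1 hv2
    exact ⟨v, hv1, hv2, hv3, hv4, hvx.symm, by rw [← hvx]; exact hp3, by omega, by omega⟩

open Classical in
theorem slot_fib {j : ℕ} (hfib : fibNonempty N t j) :
    slot N t f j = posOf N f (mfib N t j) := by
  rw [slot, if_pos hfib]

open Classical in
theorem slot_isD {j : ℕ} (hfib : ¬ fibNonempty N t j) (hD : isD N t j) :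
    slot N t f j = posOf N f (j - 1) := by
  rw [slot, if_neg hfib, if_pos hD]

open Classical in
theorem slot_else {j : ℕ} (hfib : ¬ fibNonempty N t j) (hD : ¬ isD N t j) :
    slot N t f j = bmap (RJset N t) (Pset N t f) j := by
  rw [slot, if_neg hfib, if_neg hD]

theorem slot_le (ht : CodeOn N t) (hf : IsPermOn N f) {j : ℕ} (hj1 : 1 ≤ j)
    (hj2 : j ≤ N + 1) : slot N t f j ≤ N := by
  by_cases hfib : fibNonempty N t j
  · rw [slot_fib hfib]
    obtain ⟨h1, h2, _, _⟩ := mfib_spec ht hj1 hfib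
    exact (posOf_spec N hf h1 h2).2.1
  by_cases hD : isD N t j
  · rw [slot_isD hfib hD]
    obtain ⟨h1, h2, _, _⟩ := hD
    exact (posOf_spec N hf (v := j - 1) (by omega) (by omega)).2.1
  · rw [slot_else hfib hD]
    have hmem := bmap_mem (card_RJ_P ht hf) (mem_RJset hj1 hj2 hfib hD)
    rcases Pset_cases hf hmem with h | ⟨v, h⟩
    · omega
    · exact h.2.2.2.2.2.2.2

theorem slot_inj (ht : CodeOn N t) (hf : IsPermOn N f) {j1 j2 : ℕ} (h11 : 1 ≤ j1)
    (h12 : j1 ≤ N + 1) (h21 : 1 ≤ j2) (h22 : j2 ≤ N + 1)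
    (heq : slot N t f j1 = slot N t f j2) : j1 = j2 := by
  have hval : ∀ v w : ℕ, 1 ≤ v → v ≤ N → 1 ≤ w → w ≤ N →
      posOf N f v = posOf N f w → v = w := by
    intro v w a1 a2 b1 b2 hvw
    have h1 := (posOf_spec N hf a1 a2).2.2
    have h2 := (posOf_spec N hf b1 b2).2.2
    rw [← h1, ← h2, hvw]
  by_cases hfib1 : fibNonempty N t j1 <;> by_cases hfib2 : fibNonempty N t j2
  · -- A A
    rw [slot_fib hfib1, slot_fib hfib2] at heq
    obtain ⟨a1, a2, a3, _⟩ := mfib_spec ht h11 hfib1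
    obtain ⟨b1, b2, b3, _⟩ := mfib_spec ht h21 hfib2
    have := hval _ _ a1 a2 b1 b2 heq
    rw [← a3, ← b3, this]
  · by_cases hD2 : isD N t j2
    · -- A B
      exfalso
      rw [slot_fib hfib1, slot_isD hfib2 hD2] at heq
      obtain ⟨a1, a2, a3, _⟩ := mfib_spec ht h11 hfib1
      have hD2' := hD2
      obtain ⟨c1, c2, _, _⟩ := hD2'
      have := hval _ _ a1 a2 (by omega) (by omega) heq
      have hnm := mfib_not_isNM ht h11 hfib1
      rw [this] at hnm
      exact hnm (isD_isNM hD2)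
    · -- A C
      exfalso
      rw [slot_fib hfib1, slot_else hfib2 hD2] at heq
      obtain ⟨a1, a2, a3, _⟩ := mfib_spec ht h11 hfib1
      have hmem := bmap_mem (card_RJ_P ht hf) (mem_RJset h21 h22 hfib2 hD2)
      rw [← heq] at hmem
      rcases Pset_cases hf hmem with h | ⟨v, v1, v2, v3, v4, v5, v6, v7, v8⟩
      · have := (posOf_spec N hf a1 a2).1
        omega
      · have := hval _ _ a1 a2 v1 v2 v5
        have hnm := mfib_not_isNM ht h11 hfib1
        rw [this] at hnm
        exact hnm v3
  · by_cases hD1 : isD N t j1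
    · -- B A
      exfalso
      rw [slot_isD hfib1 hD1, slot_fib hfib2] at heq
      obtain ⟨b1, b2, b3, _⟩ := mfib_spec ht h21 hfib2
      have hD1' := hD1
      obtain ⟨c1, c2, _, _⟩ := hD1'
      have := hval _ _ (by omega) (by omega) b1 b2 heq
      have hnm := mfib_not_isNM ht h21 hfib2
      rw [← this] at hnm
      exact hnm (isD_isNM hD1)
    · -- C A
      exfalso
      rw [slot_else hfib1 hD1, slot_fib hfib2] at heq
      obtain ⟨b1, b2, b3, _⟩ := mfib_spec ht h21 hfib2
      have hmem := bmap_mem (card_RJ_P ht hf) (mem_RJset h11 h12 hfib1 hD1)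
      rw [heq] at hmem
      rcases Pset_cases hf hmem with h | ⟨v, v1, v2, v3, v4, v5, v6, v7, v8⟩
      · have := (posOf_spec N hf b1 b2).1
        omega
      · have := hval _ _ b1 b2 v1 v2 v5
        have hnm := mfib_not_isNM ht h21 hfib2
        rw [this] at hnm
        exact hnm v3
  · by_cases hD1 : isD N t j1 <;> by_cases hD2 : isD N t j2
    · -- B B
      rw [slot_isD hfib1 hD1, slot_isD hfib2 hD2] at heq
      obtain ⟨c1, c2, _, _⟩ := hD1
      obtain ⟨d1, d2, _, _⟩ := hD2
      have := hval _ _ (by omega) (by omega) (by omega) (by omega) heq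
      omega
    · -- B C
      exfalso
      rw [slot_isD hfib1 hD1, slot_else hfib2 hD2] at heq
      have hD1' := hD1
      obtain ⟨c1, c2, _, _⟩ := hD1'
      have hmem := bmap_mem (card_RJ_P ht hf) (mem_RJset h21 h22 hfib2 hD2)
      rw [← heq] at hmem
      rcases Pset_cases hf hmem with h | ⟨v, v1, v2, v3, v4, v5, v6, v7, v8⟩
      · have := (posOf_spec N hf (v := j1 - 1) (by omega) (by omega)).1
        omega
      · have := hval _ _ (by omega) (by omega) v1 v2 v5
        apply v4
        rw [← this] at v4 ⊢
        rw [show j1 - 1 + 1 = j1 by omega]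
        exact hD1
    · -- C B
      exfalso
      rw [slot_else hfib1 hD1, slot_isD hfib2 hD2] at heq
      have hD2' := hD2
      obtain ⟨c1, c2, _, _⟩ := hD2'
      have hmem := bmap_mem (card_RJ_P ht hf) (mem_RJset h11 h12 hfib1 hD1)
      rw [heq] at hmem
      rcases Pset_cases hf hmem with h | ⟨v, v1, v2, v3, v4, v5, v6, v7, v8⟩
      · have := (posOf_spec N hf (v := j2 - 1) (by omega) (by omega)).1
        omega
      · have := hval _ _ (by omega) (by omega) v1 v2 v5
        apply v4
        rw [← this]
        rw [show j2 - 1 + 1 = j2 by omega]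
        exact hD2
    · -- C C
      rw [slot_else hfib1 hD1, slot_else hfib2 hD2] at heq
      exact bmap_inj (card_RJ_P ht hf) (mem_RJset h11 h12 hfib1 hD1)
        (mem_RJset h21 h22 hfib2 hD2) heq

open Classical in
theorem slot_surj (ht : CodeOn N t) (hf : IsPermOn N f) {p : ℕ} (hp : p ≤ N) :
    ∃ j, 1 ≤ j ∧ j ≤ N + 1 ∧ slot N t f j = p := by
  have hsub : (Finset.Icc 1 (N+1)).image (slot N t f) ⊆ Finset.Icc 0 N := by
    intro x hx
    rw [Finset.mem_image] at hx
    obtain ⟨j, hj, hjx⟩ := hx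
    rw [Finset.mem_Icc] at hj
    rw [Finset.mem_Icc, ← hjx]
    exact ⟨Nat.zero_le _, slot_le ht hf hj.1 hj.2⟩
  have hcard : ((Finset.Icc 1 (N+1)).image (slot N t f)).card = N + 1 := by
    rw [Finset.card_image_of_injOn, Nat.card_Icc]
    · omega
    · intro a ha b hb hab
      rw [Finset.mem_coe, Finset.mem_Icc] at ha hb
      exact slot_inj ht hf ha.1 ha.2 hb.1 hb.2 hab
  have heq : (Finset.Icc 1 (N+1)).image (slot N t f) = Finset.Icc 0 N := by
    apply Finset.eq_of_subset_of_card_le hsub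
    rw [Nat.card_Icc, hcard]
    omega
  have hp' : p ∈ (Finset.Icc 1 (N+1)).image (slot N t f) := by
    rw [heq, Finset.mem_Icc]
    omega
  rw [Finset.mem_image] at hp'
  obtain ⟨j, hj, hjp⟩ := hp'
  rw [Finset.mem_Icc] at hj
  exact ⟨j, hj.1, hj.2, hjp⟩

end PermSide

namespace PermSide

open PermAux

variable {N : ℕ} {s : ℕ → ℕ}

def restrict (N : ℕ) (s : ℕ → ℕ) : ℕ → ℕ := fun i => if i ≤ N then s i else 0

theorem restrict_eq {i : ℕ} (h : i ≤ N) : restrict N s i = s i := if_pos h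

theorem codeOn_restrict (hs : CodeOn (N+1) s) : CodeOn N (restrict N s) := by
  constructor
  · intro i h1 h2
    rw [restrict_eq h2]
    exact hs.1 i h1 (by omega)
  · intro i hi
    by_cases h : i ≤ N
    · rw [restrict_eq h]
      exact hs.2 i (by omega)
    · simp [restrict, h]

theorem NMset_step_fib (hs : CodeOn (N+1) s)
    (hfib : fibNonempty N (restrict N s) (s (N+1))) :
    NMset (N+1) s = NMset N (restrict N s) ∪ {mfib N (restrict N s) (s (N+1))} := by
  have ht : CodeOn N (restrict N s) := codeOn_restrict hs
  have hj1 : 1 ≤ s (N+1) := (hs.1 (N+1) (by omega) (by omega)).1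
  obtain ⟨hm1, hm2, hm3, hm4⟩ := mfib_spec ht hj1 hfib
  apply Set.ext
  intro i
  simp only [NMset, isNM, Set.mem_setOf_eq, Set.mem_union, Set.mem_singleton_iff]
  constructor
  · rintro ⟨hi1, hi2, m, him, hmn, heq⟩
    have hiN : i ≤ N := by
      rcases Nat.lt_or_ge i (N+1) with h | h
      · omega
      · omega
    rcases Nat.lt_or_ge m (N+1) with hm | hm
    · exact Or.inl ⟨hi1, hiN, m, him, by omega,
        by rw [restrict_eq (by omega), restrict_eq hiN]; exact heq⟩
    · have hmN1 : m = N + 1 := by omega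
      rw [hmN1] at heq
      have hti : restrict N s i = s (N+1) := by rw [restrict_eq hiN]; omega
      have hile : i ≤ mfib N (restrict N s) (s (N+1)) :=
        Nat.le_findGreatest (P := fun m => restrict N s m = s (N+1)) hiN hti
      rcases Nat.eq_or_lt_of_le hile with heq2 | hlt
      · exact Or.inr heq2
      · exact Or.inl ⟨hi1, hiN, _, hlt, hm2, by rw [hm3, hti]⟩
  · rintro (⟨hi1, hi2, m, him, hmn, heq⟩ | hi)
    · refine ⟨hi1, by omega, m, him, by omega, ?_⟩
      rw [restrict_eq (by omega), restrict_eq (by omega)] at heq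
      exact heq
    · subst hi
      refine ⟨hm1, by omega, N+1, by omega, le_rfl, ?_⟩
      rw [restrict_eq hm2] at hm3
      omega

theorem NMset_step_nofib (hs : CodeOn (N+1) s)
    (hfib : ¬ fibNonempty N (restrict N s) (s (N+1))) :
    NMset (N+1) s = NMset N (restrict N s) := by
  apply Set.ext
  intro i
  simp only [NMset, isNM, Set.mem_setOf_eq]
  constructor
  · rintro ⟨hi1, hi2, m, him, hmn, heq⟩
    have hiN : i ≤ N := by omega
    rcases Nat.lt_or_ge m (N+1) with hm | hm
    · exact ⟨hi1, hiN, m, him, by omega,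
        by rw [restrict_eq (by omega), restrict_eq hiN]; exact heq⟩
    · exfalso
      have hmN1 : m = N + 1 := by omega
      rw [hmN1] at heq
      exact hfib ⟨i, hi1, hiN, by rw [restrict_eq hiN]; omega⟩
  · rintro ⟨hi1, hi2, m, him, hmn, heq⟩
    refine ⟨hi1, by omega, m, him, by omega, ?_⟩
    rw [restrict_eq (by omega), restrict_eq (by omega)] at heq
    exact heq

theorem Dset_step (hs : CodeOn (N+1) s) (hN : 1 ≤ N) :
    Dset (N+1) s = (Dset N (restrict N s) \ {s (N+1)}) ∪ {i | s (N+1) = s N ∧ i = N+1} := by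
  apply Set.ext
  intro i
  simp only [Dset, isD, fibNonempty, Set.mem_setOf_eq, Set.mem_union, Set.mem_diff,
    Set.mem_singleton_iff]
  constructor
  · rintro ⟨hi2, hiN, heq, hno⟩
    rcases Nat.lt_or_ge i (N+1) with hi | hi
    · left
      refine ⟨⟨hi2, by omega, ?_, ?_⟩, ?_⟩
      · rw [restrict_eq (by omega), restrict_eq (by omega)]
        exact heq
      · rintro ⟨m, h1, h2, h3⟩
        rw [restrict_eq (by omega)] at h3
        exact hno ⟨m, h1, by omega, h3⟩
      · intro hcon
        exact hno ⟨N+1, by omega, le_rfl, hcon.symm⟩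
    · right
      have : i = N + 1 := by omega
      subst this
      refine ⟨?_, rfl⟩
      rw [show N + 1 - 1 = N by omega] at heq
      exact heq
  · rintro (⟨⟨hi2, hiN, heq, hno⟩, hne⟩ | ⟨heq, hi⟩)
    · refine ⟨hi2, by omega, ?_, ?_⟩
      · rw [restrict_eq (by omega), restrict_eq (by omega)] at heq
        exact heq
      · rintro ⟨m, h1, h2, h3⟩
        rcases Nat.lt_or_ge m (N+1) with hm | hm
        · exact hno ⟨m, h1, by omega, by rw [restrict_eq (by omega)]; exact h3⟩
        · have : m = N + 1 := by omega
          rw [this] at h3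
          exact hne h3.symm
    · subst hi
      refine ⟨by omega, le_rfl, ?_, ?_⟩
      · rw [show N + 1 - 1 = N by omega]
        exact heq
      · rintro ⟨m, h1, h2, h3⟩
        rcases Nat.lt_or_ge m (N+1) with hm | hm
        · have := (hs.1 m h1 h2).2
          omega
        · have : m = N + 1 := by omega
          rw [this] at h3
          have := (hs.1 N (by omega) (by omega)).2
          omega

end PermSide

namespace PermSide

open PermAux

theorem perm_side : ∀ N : ℕ, 1 ≤ N →
    ∃ Φ : {s : ℕ → ℕ // CodeOn N s} → {f : ℕ → ℕ // IsPermOn N f},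
      Function.Bijective Φ ∧ ∀ s, permAscBottom N (Φ s).1 = NMset N s.1 ∧
        permAdjAsc N (Φ s).1 = Dset N s.1 := by
  intro N
  induction N with
  | zero => omega
  | succ N ih =>
    intro _
    rcases Nat.lt_or_ge N 1 with hN0 | hN
    · -- base case : N = 0, permutations of {1}
      have hN : N = 0 := by omega
      subst hN
      have hperm1 : IsPermOn 1 (fun i => if i = 1 then 1 else 0) := by
        constructor
        · refine ⟨?_, ?_, ?_⟩
          · intro q hq
            rw [Set.mem_Icc] at hq
            have : q = 1 := by omega
            simp [this]
          · intro a ha b hb _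
            rw [Set.mem_Icc] at ha hb
            omega
          · intro v hv
            rw [Set.mem_Icc] at hv
            have : v = 1 := by omega
            exact ⟨1, by rw [Set.mem_Icc]; omega, by simp [this]⟩
        · intro i hi
          rw [Set.mem_Icc] at hi
          have : i ≠ 1 := by omega
          simp [this]
      refine ⟨fun _ => ⟨fun i => if i = 1 then 1 else 0, hperm1⟩, ⟨?_, ?_⟩, ?_⟩
      · intro s1 s2 _
        apply Subtype.ext
        funext i
        by_cases h : 1 ≤ i ∧ i ≤ 1
        · have h1 : i = 1 := by omega
          have e1 := s1.2.1 i h.1 h.2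
          have e2 := s2.2.1 i h.1 h.2
          omega
        · rw [s1.2.2 i h, s2.2.2 i h]
      · intro g
        refine ⟨⟨fun i => if i = 1 then 1 else 0, ?_⟩, ?_⟩
        · constructor
          · intro i h1 h2
            have : i = 1 := by omega
            simp [this]
          · intro i hi
            have : i ≠ 1 := by omega
            simp [this]
        · apply Subtype.ext
          funext i
          by_cases h : 1 ≤ i ∧ i ≤ 1
          · have h1 : i = 1 := by omega
            have hm := mem_of_mem 1 g.2 h.1 h.2
            subst h1
            show (if (1:ℕ) = 1 then 1 else 0) = g.1 1
            rw [if_pos rfl]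
            omega
          · rw [g.2.2 i (by rw [Set.mem_Icc]; omega)]
            have : i ≠ 1 := by omega
            simp [this]
      · intro s
        constructor
        · apply Set.ext
          intro v
          simp only [permAscBottom, NMset, isNM, Set.mem_setOf_eq]
          constructor
          · rintro ⟨j, h1, h2, _⟩
            omega
          · rintro ⟨h1, h2, m, h3, h4, _⟩
            omega
        · apply Set.ext
          intro v
          simp only [permAdjAsc, Dset, isD, Set.mem_setOf_eq]
          constructor
          · rintro ⟨j, h1, h2, _⟩
            omega
          · rintro ⟨h1, h2, _⟩
            omega
    · -- inductive step
      obtain ⟨Φ', hbij, hstat⟩ := ih hN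
      set T : {s : ℕ → ℕ // CodeOn (N+1) s} → {u : ℕ → ℕ // CodeOn N u} :=
        fun s => ⟨restrict N s.1, codeOn_restrict s.2⟩ with hT
      have hjbnd : ∀ s : {s : ℕ → ℕ // CodeOn (N+1) s},
          1 ≤ s.1 (N+1) ∧ s.1 (N+1) ≤ N + 1 := fun s => s.2.1 (N+1) (by omega) (by omega)
      refine ⟨fun s => ⟨ins N (Φ' (T s)).1 (slot N (T s).1 (Φ' (T s)).1 (s.1 (N+1))),
        isPermOn_ins (Φ' (T s)).2
          (slot_le (T s).2 (Φ' (T s)).2 (hjbnd s).1 (hjbnd s).2)⟩, ⟨?_, ?_⟩, ?_⟩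
      · -- injective
        intro s1 s2 heq
        have heqv : ins N (Φ' (T s1)).1 (slot N (T s1).1 (Φ' (T s1)).1 (s1.1 (N+1)))
            = ins N (Φ' (T s2)).1 (slot N (T s2).1 (Φ' (T s2)).1 (s2.1 (N+1))) :=
          congrArg Subtype.val heq
        have hp1 : slot N (T s1).1 (Φ' (T s1)).1 (s1.1 (N+1)) ≤ N :=
          slot_le (T s1).2 (Φ' (T s1)).2 (hjbnd s1).1 (hjbnd s1).2
        have hp2 : slot N (T s2).1 (Φ' (T s2)).1 (s2.1 (N+1)) ≤ N :=
          slot_le (T s2).2 (Φ' (T s2)).2 (hjbnd s2).1 (hjbnd s2).2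
        have hpeq : slot N (T s1).1 (Φ' (T s1)).1 (s1.1 (N+1))
            = slot N (T s2).1 (Φ' (T s2)).1 (s2.1 (N+1)) := by
          have h1 : ins N (Φ' (T s1)).1 (slot N (T s1).1 (Φ' (T s1)).1 (s1.1 (N+1)))
              (slot N (T s1).1 (Φ' (T s1)).1 (s1.1 (N+1)) + 1) = N + 1 := ins_at
          rw [heqv] at h1
          have := (ins_eq_max_iff (Φ' (T s2)).2 hp2
            (q := slot N (T s1).1 (Φ' (T s1)).1 (s1.1 (N+1)) + 1) (by omega) (by omega)).1 h1
          omega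
        have hfeq : (Φ' (T s1)).1 = (Φ' (T s2)).1 := by
          have e1 := rem_ins (f := (Φ' (T s1)).1)
            (p := slot N (T s1).1 (Φ' (T s1)).1 (s1.1 (N+1))) (Φ' (T s1)).2 hp1
          have e2 := rem_ins (f := (Φ' (T s2)).1)
            (p := slot N (T s2).1 (Φ' (T s2)).1 (s2.1 (N+1))) (Φ' (T s2)).2 hp2
          rw [← e1, ← e2, heqv, hpeq]
        have hTeq : T s1 = T s2 := hbij.1 (Subtype.ext hfeq)
        have hueq : restrict N s1.1 = restrict N s2.1 := congrArg Subtype.val hTeq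
        have hjeq : s1.1 (N+1) = s2.1 (N+1) := by
          apply slot_inj (T s1).2 (Φ' (T s1)).2 (hjbnd s1).1 (hjbnd s1).2
            (hjbnd s2).1 (hjbnd s2).2
          rw [hpeq, hTeq]
        apply Subtype.ext
        funext i
        by_cases hi : i ≤ N
        · have := congrFun hueq i
          rwa [restrict_eq hi, restrict_eq hi] at this
        · by_cases hi2 : i = N + 1
          · rw [hi2]; exact hjeq
          · rw [s1.2.2 i (by omega), s2.2.2 i (by omega)]
      · -- surjective
        intro g
        have hgbnd := posOf_spec (N+1) g.2 (v := N+1) (by omega) (by omega)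
        set P := posOf (N+1) g.1 (N+1)
        set p := P - 1 with hpdef
        have hp : p ≤ N := by omega
        have hgp : g.1 (p+1) = N + 1 := by
          rw [show p + 1 = P by omega]
          exact hgbnd.2.2
        have hrem : IsPermOn N (rem N g.1 p) := isPermOn_rem g.2 hp hgp
        obtain ⟨u, hu⟩ := hbij.2 ⟨rem N g.1 p, hrem⟩
        have hu1 : (Φ' u).1 = rem N g.1 p := by rw [hu]
        obtain ⟨j, hj1, hj2, hjslot⟩ := slot_surj u.2 (Φ' u).2 (p := p) hp
        set sfun : ℕ → ℕ := fun i => if i ≤ N then u.1 i else if i = N+1 then j else 0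
          with hsfun
        have hscode : CodeOn (N+1) sfun := by
          constructor
          · intro i h1 h2
            by_cases hi : i ≤ N
            · simp only [hsfun, if_pos hi]
              exact u.2.1 i h1 hi
            · have hiN1 : i = N+1 := by omega
              subst hiN1
              have e : sfun (N+1) = j := by
                simp only [hsfun]
                rw [if_neg (by omega)]
                simp
              rw [e]
              omega
          · intro i hi
            have h1 : ¬ i ≤ N ∨ i = 0 := by omega
            rcases h1 with h1 | h1
            · have : i ≠ N + 1 := by omega
              simp [hsfun, h1, this]
            · simp only [hsfun, h1]
              rw [if_pos (by omega)]
              exact u.2.2 0 (by omega)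
        have hres : restrict N sfun = u.1 := by
          funext i
          by_cases hi : i ≤ N
          · rw [restrict_eq hi]
            simp [hsfun, hi]
          · have e1 : restrict N sfun i = 0 := by simp [restrict, hi]
            rw [e1, u.2.2 i (by omega)]
        refine ⟨⟨sfun, hscode⟩, ?_⟩
        apply Subtype.ext
        have hTs : T ⟨sfun, hscode⟩ = u := Subtype.ext hres
        have hsN1 : sfun (N+1) = j := by
          simp only [hsfun]
          rw [if_neg (by omega)]
          simp
        show ins N (Φ' (T ⟨sfun, hscode⟩)).1
          (slot N (T ⟨sfun, hscode⟩).1 (Φ' (T ⟨sfun, hscode⟩)).1 (sfun (N+1))) = g.1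
        rw [hTs, hsN1, hjslot, hu1]
        exact ins_rem g.2 hp hgp
      · -- statistics
        intro s
        set t := (T s).1 with htdef
        have ht : CodeOn N t := (T s).2
        set f := (Φ' (T s)).1 with hfdef
        have hf : IsPermOn N f := (Φ' (T s)).2
        set j := s.1 (N+1) with hjdef
        have hj1 : 1 ≤ j := (hjbnd s).1
        have hj2 : j ≤ N + 1 := (hjbnd s).2
        set p := slot N t f j with hpdef
        have hABf : permAscBottom N f = NMset N t := (hstat (T s)).1
        have hADf : permAdjAsc N f = Dset N t := (hstat (T s)).2
        show permAscBottom (N+1) (ins N f p) = NMset (N+1) s.1 ∧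
          permAdjAsc (N+1) (ins N f p) = Dset (N+1) s.1
        have hDstep := Dset_step s.2 hN
        by_cases hfib : fibNonempty N t j
        · -- case A
          obtain ⟨hm1, hm2, hm3, hm4⟩ := mfib_spec ht hj1 hfib
          set v := mfib N t j with hvdef
          have hpv : p = posOf N f v := slot_fib hfib
          obtain ⟨hq1, hq2, hq3⟩ := posOf_spec N hf hm1 hm2
          rw [← hpv] at hq1 hq2 hq3
          have hNMstep := NMset_step_fib s.2 hfib
          have hvN : v = N ↔ s.1 (N+1) = s.1 N := by
            constructor
            · intro hv
              have h2 : restrict N s.1 N = j := by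
                have hm3' : restrict N s.1 v = j := hm3
                rwa [hv] at hm3'
              rw [restrict_eq le_rfl] at h2
              omega
            · intro hv
              have htN : t N = j := by
                show restrict N s.1 N = j
                rw [restrict_eq le_rfl]
                omega
              have h3 : N ≤ mfib N t j :=
                Nat.le_findGreatest (P := fun m => t m = j) le_rfl htN
              omega
          constructor
          · rw [ascBottom_ins hf hq1 hq2, hABf, hNMstep, hq3]
          · rw [adjAsc_ins hf hq1 hq2, hADf, hDstep, hq3]
            have e1 : Dset N t \ {v + 1} = Dset N t := by
              apply Set.diff_singleton_eq_self
              rintro ⟨a1, a2, a3, _⟩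
              rw [show v + 1 - 1 = v by omega] at a3
              rw [hm3] at a3
              exact hm4 (v+1) (by omega) a2 a3
            have e2 : Dset N t \ {j} = Dset N t := by
              apply Set.diff_singleton_eq_self
              rintro ⟨_, _, _, hnofib⟩
              exact hnofib hfib
            rw [e1, e2]
            have e3 : {x : ℕ | v = N ∧ x = N + 1} = {i : ℕ | s.1 (N+1) = s.1 N ∧ i = N + 1} := by
              apply Set.ext
              intro x
              simp only [Set.mem_setOf_eq]
              rw [hvN]
            rw [e3]
        by_cases hD : isD N t j
        · -- case B
          have hDcopy := hD
          obtain ⟨hd1, hd2, hd3, _⟩ := hDcopy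
          have hpv : p = posOf N f (j-1) := slot_isD hfib hD
          obtain ⟨hq1, hq2, hq3⟩ := posOf_spec N hf (v := j-1) (by omega) (by omega)
          rw [← hpv] at hq1 hq2 hq3
          have hNMstep := NMset_step_nofib s.2 hfib
          have hnotN : ¬ (s.1 (N+1) = s.1 N) := by
            intro hcon
            apply hfib
            refine ⟨N, by omega, le_rfl, ?_⟩
            show restrict N s.1 N = j
            rw [restrict_eq le_rfl]
            omega
          constructor
          · rw [ascBottom_ins hf hq1 hq2, hABf, hNMstep, hq3]
            apply Set.union_eq_self_of_subset_right
            intro x hx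
            rw [Set.mem_singleton_iff] at hx
            subst hx
            exact isD_isNM hD
          · rw [adjAsc_ins hf hq1 hq2, hADf, hDstep, hq3]
            rw [show j - 1 + 1 = j by omega]
            have e3 : {x : ℕ | j - 1 = N ∧ x = N + 1} = {i : ℕ | s.1 (N+1) = s.1 N ∧ i = N + 1} := by
              apply Set.ext
              intro x
              simp only [Set.mem_setOf_eq]
              constructor
              · rintro ⟨a, _⟩
                omega
              · rintro ⟨a, _⟩
                exact absurd a hnotN
            rw [e3]
        · -- case C
          have hpv : p = bmap (RJset N t) (Pset N t f) j := slot_else hfib hD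
          have hmem : p ∈ Pset N t f := by
            rw [hpv]
            exact bmap_mem (card_RJ_P ht hf) (mem_RJset hj1 hj2 hfib hD)
          have hNMstep := NMset_step_nofib s.2 hfib
          have hnotN : ¬ (s.1 (N+1) = s.1 N) := by
            intro hcon
            apply hfib
            refine ⟨N, by omega, le_rfl, ?_⟩
            show restrict N s.1 N = j
            rw [restrict_eq le_rfl]
            omega
          have hjD : j ∉ Dset N t := hD
          have e2 : Dset N t \ {j} = Dset N t := Set.diff_singleton_eq_self hjD
          have hright : {i : ℕ | s.1 (N+1) = s.1 N ∧ i = N + 1} = (∅ : Set ℕ) := by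
            apply Set.ext
            intro x
            simp only [Set.mem_setOf_eq, Set.mem_empty_iff_false, iff_false]
            rintro ⟨a, _⟩
            exact hnotN a
          rcases Pset_cases hf hmem with hp0 | ⟨w, w1, w2, w3, w4, w5, w6, w7, w8⟩
          · constructor
            · rw [hp0, ascBottom_ins0 hf, hABf, hNMstep]
            · rw [hp0, adjAsc_ins0 hf, hADf, hDstep, e2, hright, Set.union_empty]
          · constructor
            · rw [ascBottom_ins hf w7 w8, hABf, hNMstep, w6]
              apply Set.union_eq_self_of_subset_right
              intro x hx
              rw [Set.mem_singleton_iff] at hx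
              subst hx
              exact w3
            · rw [adjAsc_ins hf w7 w8, hADf, hDstep, w6, e2, hright, Set.union_empty]
              have e1 : Dset N t \ {w + 1} = Dset N t := Set.diff_singleton_eq_self w4
              rw [e1]
              have hwN : w ≠ N := by
                rintro rfl
                obtain ⟨_, _, m, m1, m2, _⟩ := w3
                omega
              have e4 : {x : ℕ | w = N ∧ x = N + 1} = (∅ : Set ℕ) := by
                apply Set.ext
                intro x
                simp only [Set.mem_setOf_eq, Set.mem_empty_iff_false, iff_false]
                rintro ⟨a, _⟩
                exact hwN a
              rw [e4, Set.union_empty]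

end PermSide
/-- There is a bijection from matchings of size `n` without left
nestings to permutations of `{1,…,n}` mapping left crossings to ascent bottoms
and double crossings to short ascents. -/
theorem matchings_to_perms_lcr_to_ascbottom (n : ℕ) (hn : 1 ≤ n) :
    ∃ h : {M : Matching n // M.NoLeftNesting} → {f : ℕ → ℕ // IsPermOn n f},
      Function.Bijective h ∧
      ∀ M : {M : Matching n // M.NoLeftNesting},
        permAscBottom n (h M).1 = M.1.LcrSet ∧
        (fun a => a - 1) '' permAdjAsc n (h M).1 =
          (fun i => i - 1) '' M.1.LRcrSet := by
  obtain ⟨Φ, hbij, hstat⟩ := PermSide.perm_side n hn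
  have hEbij : Function.Bijective
      (fun M : {M : Matching n // M.NoLeftNesting} =>
        (⟨MatchAux.codeOf M.1, MatchAux.codeOn_codeOf M.1⟩ : {s : ℕ → ℕ // CodeOn n s})) := by
    constructor
    · intro M1 M2 h
      have hcode : MatchAux.codeOf M1.1 = MatchAux.codeOf M2.1 := congrArg Subtype.val h
      apply Subtype.ext
      have e1 := MatchAux.toMatching_codeOf M1.1 M1.2
      have e2 := MatchAux.toMatching_codeOf M2.1 M2.2
      rw [← e1, ← e2]
      congr 1
    · intro s
      refine ⟨⟨MatchAux.toMatching n s.1 s.2, MatchAux.toMatching_nln n s.1 s.2⟩, ?_⟩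
      apply Subtype.ext
      show MatchAux.codeOf (MatchAux.toMatching n s.1 s.2) = s.1
      exact MatchAux.codeOf_toMatching s.2
  refine ⟨fun M => Φ ⟨MatchAux.codeOf M.1, MatchAux.codeOn_codeOf M.1⟩,
    Function.Bijective.comp hbij hEbij, ?_⟩
  intro M
  have h1 := hstat ⟨MatchAux.codeOf M.1, MatchAux.codeOn_codeOf M.1⟩
  constructor
  · rw [h1.1]
    exact (MatchAux.Lcr_eq M.2).symm
  · rw [h1.2, MatchAux.LRcr_eq M.2]
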